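/- arXiv:1405.6312 — 5 statements merged into one kernel-verified Lean document; each statement's English description precedes it below -/
import Mathlib

section
/- Let B be a standard one-dimensional Brownian motion started at 0 (on a probability space (Ω, P): B(0)=0 a.s., B has independent increments, for all t ≥ 0 and h > 0 the increment B(t+h) − B(t) is Gaussian with mean 0 and variance h, and t ↦ B(t) is a.s. continuous). Then for every real x and every interval [a,b] ⊆ [0,∞), P(∃ s ∈ [a,b], B(s) = 0) ≥ P(∃ s ∈ [a,b], x + B(s) = 0); that is, the probability that Brownian motion started at 0 has a zero in [a,b] is at least the probability that Brownian motion started at x has a zero in [a,b]. -/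
open MeasureTheory ProbabilityTheory Set

/-- A standard one-dimensional Brownian motion started at 0 on the probability
space `(Ω, P)`: `B 0 = 0` a.s., independent increments, Gaussian increments
`B (t+h) - B t ~ N(0, h)`, and a.s. continuous paths on `[0, ∞)`. -/
structure IsStdBM {Ω : Type} [MeasurableSpace Ω] (P : Measure Ω) (B : ℝ → Ω → ℝ) : Prop where
  isProb : IsProbabilityMeasure P
  meas : ∀ t : ℝ, Measurable (B t)
  start : ∀ᵐ ω ∂P, B 0 ω = 0
  indepIncr : ∀ (n : ℕ) (t : Fin (n + 1) → ℝ), Monotone t → (∀ i, 0 ≤ t i) →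
    iIndepFun
      (fun (i : Fin n) => fun ω => B (t i.succ) ω - B (t i.castSucc) ω) P
  gaussIncr : ∀ t h : ℝ, 0 ≤ t → 0 < h →
    P.map (fun ω => B (t + h) ω - B t ω) = gaussianReal 0 h.toNNReal
  cont : ∀ᵐ ω ∂P, ContinuousOn (fun t => B t ω) (Ici 0)


open scoped NNReal ENNReal

namespace BMZero

/-- `g` is even and nonincreasing in `|·|`. -/
def SU (g : ℝ → ℝ≥0∞) : Prop := ∀ y z : ℝ, |y| ≤ |z| → g z ≤ g y

/-- A set downward closed with respect to `|·|`. -/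
def DC (S : Set ℝ) : Prop := ∀ w ∈ S, ∀ z : ℝ, |z| ≤ |w| → z ∈ S

lemma gaussianPDF_le {v : ℝ≥0} {s w : ℝ} (hs : 0 ≤ s) (hw : 2 * w ≤ s) :
    gaussianPDF s v w ≤ gaussianPDF 0 v w := by
  unfold gaussianPDF
  apply ENNReal.ofReal_le_ofReal
  unfold gaussianPDFReal
  apply mul_le_mul_of_nonneg_left _ (by positivity)
  apply Real.exp_le_exp.2
  rcases eq_or_ne (v : ℝ) 0 with h | h
  · simp [h]
  · have hv : (0:ℝ) < v := lt_of_le_of_ne v.2 (Ne.symm h)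
    rw [div_le_div_iff₀ (by linarith) (by linarith)]
    nlinarith [sq_nonneg (w - s), sq_nonneg w, mul_nonneg (mul_nonneg hs (sub_nonneg.2 hw)) hv.le]

lemma gaussianReal_shift_apply (y : ℝ) (v : ℝ≥0) {A : Set ℝ} (hA : MeasurableSet A) :
    gaussianReal y v A = gaussianReal 0 v ((· + y) ⁻¹' A) := by
  conv_lhs => rw [show gaussianReal y v = gaussianReal (0 + y) v by rw [zero_add],
    ← gaussianReal_map_add_const (μ := 0) (v := v) y]
  rw [Measure.map_apply (measurable_add_const y) hA]

/-- Key shift inequality: if `2w ≤ s` on `A`, a gaussian centered at `s ≥ 0`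
gives `A` less mass than one centered at `0`. -/
lemma shiftLE {v : ℝ≥0} (hv : v ≠ 0) {s : ℝ} (hs : 0 ≤ s) {A : Set ℝ}
    (h : ∀ w ∈ A, 2 * w ≤ s) :
    gaussianReal s v A ≤ gaussianReal 0 v A := by
  rw [gaussianReal_apply _ hv, gaussianReal_apply _ hv]
  refine setLIntegral_mono (measurable_gaussianPDF _ _) fun w hw => ?_
  exact gaussianPDF_le hs (h w hw)

lemma gauss_noatom {v : ℝ≥0} (hv : v ≠ 0) (y w : ℝ) : gaussianReal y v {w} = 0 :=
  gaussianReal_absolutelyContinuous y hv (measure_singleton w)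

/-- Interval comparison: for `0 ≤ y₁ ≤ y₂` and `c ≥ 0`. -/
lemma interval_le {v : ℝ≥0} (hv : v ≠ 0) {y₁ y₂ c : ℝ} (h1 : 0 ≤ y₁) (h12 : y₁ ≤ y₂)
    (hc : 0 ≤ c) :
    gaussianReal y₂ v (Ioc (-c) c) ≤ gaussianReal y₁ v (Ioc (-c) c) := by
  have hshift : ∀ y : ℝ, gaussianReal y v (Ioc (-c) c)
      = gaussianReal 0 v (Ioc (-c - y) (c - y)) := by
    intro y
    rw [gaussianReal_shift_apply y v measurableSet_Ioc]
    congr 1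
    ext w
    simp only [mem_preimage, mem_Ioc]
    constructor <;> intro h <;> constructor <;> linarith [h.1, h.2]
  rw [hshift, hshift]
  set d := y₂ - y₁ with hd
  have hd0 : 0 ≤ d := by simp [hd]; linarith
  have hset : Ioc (-c - y₂) (c - y₂) = Ioc (-c - y₁ - d) (c - y₁ - d) := by
    congr 1 <;> ring
  rw [hset]
  set l := -c - y₁ with hl
  set r := c - y₁ with hr
  have hlr : l ≤ r := by simp [hl, hr]; linarith
  have hrc : r ≤ c := by simp [hr]; linarith
  have key : ∀ s : ℝ, 0 ≤ s → (∀ w ∈ Ioc (r - s) r, 2 * w ≤ s + (r - s) + (r - s)) → True := fun _ _ _ => trivial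
  rcases le_or_gt (2 * c) d with hcase | hcase
  · -- shift bigger than window: direct comparison
    have : gaussianReal 0 v (Ioc (l - d) (r - d)) = gaussianReal d v (Ioc l r) := by
      rw [gaussianReal_shift_apply d v measurableSet_Ioc]
      congr 1
      ext w
      simp only [mem_preimage, mem_Ioc]
      constructor <;> intro h <;> constructor <;> linarith [h.1, h.2]
    rw [this]
    exact shiftLE hv hd0 (fun w hw => by have := hw.2; linarith)
  · -- overlapping windows: cancel the common part
    have hlrd : l ≤ r - d := by simp [hl, hr]; linarith
    have hA1 : gaussianReal 0 v (Ioc (l - d) (r - d))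
        = gaussianReal 0 v (Ioc (l - d) l) + gaussianReal 0 v (Ioc l (r - d)) := by
      rw [← measure_union (Set.Ioc_disjoint_Ioc_of_le le_rfl) measurableSet_Ioc,
        Set.Ioc_union_Ioc_eq_Ioc (by linarith) hlrd]
    have hA2 : gaussianReal 0 v (Ioc l r)
        = gaussianReal 0 v (Ioc l (r - d)) + gaussianReal 0 v (Ioc (r - d) r) := by
      rw [← measure_union (Set.Ioc_disjoint_Ioc_of_le le_rfl) measurableSet_Ioc,
        Set.Ioc_union_Ioc_eq_Ioc hlrd (by linarith)]
    rw [hA1, hA2, add_comm (gaussianReal 0 v (Ioc (l - d) l))]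
    refine add_le_add le_rfl ?_
    have h13 : gaussianReal 0 v (Ioc (l - d) l) = gaussianReal (2 * c) v (Ioc (r - d) r) := by
      rw [gaussianReal_shift_apply (2 * c) v measurableSet_Ioc]
      congr 1
      ext w
      simp only [mem_preimage, mem_Ioc, hl, hr]
      constructor <;> intro h <;> constructor <;> linarith [h.1, h.2]
    rw [h13]
    exact shiftLE hv (by linarith) (fun w hw => by have := hw.2; linarith)

lemma DC_le (v : ℝ≥0) {S : Set ℝ} (hS : MeasurableSet S) (hdc : DC S)
    {y₁ y₂ : ℝ} (h1 : 0 ≤ y₁) (h12 : y₁ ≤ y₂) :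
    gaussianReal y₂ v S ≤ gaussianReal y₁ v S := by
  rcases eq_or_ne v 0 with hv | hv
  · subst hv
    rw [gaussianReal_zero_var, gaussianReal_zero_var,
      Measure.dirac_apply' _ hS, Measure.dirac_apply' _ hS]
    by_cases h2 : y₂ ∈ S
    · have h1' : y₁ ∈ S := hdc y₂ h2 y₁ (by rw [abs_of_nonneg h1, abs_of_nonneg (h1.trans h12)]; exact h12)
      simp [indicator_of_mem h2, indicator_of_mem h1']
    · simp [indicator_of_notMem h2]
  · rcases eq_empty_or_nonempty S with rfl | hne
    · simp
  -- bounded or not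
    by_cases hbdd : BddAbove (abs '' S)
    · set c := sSup (abs '' S) with hc
      have hcne : (abs '' S).Nonempty := hne.image _
      have hc0 : 0 ≤ c := by
        obtain ⟨w, hw⟩ := hne
        exact le_trans (abs_nonneg w) (le_csSup hbdd ⟨w, hw, rfl⟩)
      have hsub1 : Ioo (-c) c ⊆ S := by
        intro w hw
        have habs : |w| < c := abs_lt.2 ⟨hw.1, hw.2⟩
        obtain ⟨u, hu, hlt⟩ := exists_lt_of_lt_csSup hcne habs
        obtain ⟨w', hw', rfl⟩ := hu
        exact hdc w' hw' w hlt.le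
      have hsub2 : S ⊆ Icc (-c) c := by
        intro w hw
        have : |w| ≤ c := le_csSup hbdd ⟨w, hw, rfl⟩
        exact abs_le.1 this
      have hIcc : Icc (-c) c ⊆ Ioo (-c) c ∪ {-c} ∪ {c} := by
        intro w hw
        rcases eq_or_lt_of_le hw.1 with h | h
        · exact Or.inl (Or.inr (by simp [← h]))
        rcases eq_or_lt_of_le hw.2 with h' | h'
        · exact Or.inr (by simp [h'])
        · exact Or.inl (Or.inl ⟨h, h'⟩)
      have hsqueeze : ∀ y : ℝ, gaussianReal y v S = gaussianReal y v (Ioc (-c) c) := by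
        intro y
        have h1' : gaussianReal y v (Icc (-c) c) ≤ gaussianReal y v (Ioo (-c) c) := by
          calc gaussianReal y v (Icc (-c) c) ≤ gaussianReal y v (Ioo (-c) c ∪ {-c} ∪ {c}) :=
                measure_mono hIcc
            _ ≤ gaussianReal y v (Ioo (-c) c ∪ {-c}) + gaussianReal y v {c} := measure_union_le _ _
            _ ≤ gaussianReal y v (Ioo (-c) c) + gaussianReal y v {-c} + gaussianReal y v {c} :=
                add_le_add (measure_union_le _ _) le_rfl
            _ = gaussianReal y v (Ioo (-c) c) := by rw [gauss_noatom hv, gauss_noatom hv]; simp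
        have hSle : gaussianReal y v S ≤ gaussianReal y v (Ioo (-c) c) :=
          le_trans (measure_mono hsub2) h1'
        have hSge : gaussianReal y v (Ioo (-c) c) ≤ gaussianReal y v S := measure_mono hsub1
        have hIocle : gaussianReal y v (Ioc (-c) c) ≤ gaussianReal y v (Ioo (-c) c) :=
          le_trans (measure_mono Ioc_subset_Icc_self) h1'
        have hIocge : gaussianReal y v (Ioo (-c) c) ≤ gaussianReal y v (Ioc (-c) c) :=
          measure_mono Ioo_subset_Ioc_self
        exact le_antisymm (le_trans hSle hIocge) (le_trans hIocle hSge)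
      rw [hsqueeze y₁, hsqueeze y₂]
      exact interval_le hv h1 h12 hc0
    · -- unbounded: S = univ
      have : S = univ := by
        ext z
        simp only [mem_univ, iff_true]
        rw [not_bddAbove_iff] at hbdd
        obtain ⟨u, ⟨w, hw, rfl⟩, hlt⟩ := hbdd |z|
        exact hdc w hw z hlt.le
      rw [this]
      simp

lemma SU.even {g : ℝ → ℝ≥0∞} (hsu : SU g) (y : ℝ) : g (-y) = g y :=
  le_antisymm (hsu _ _ (by rw [abs_neg])) (hsu _ _ (by rw [abs_neg]))

lemma gaussianReal_map_neg (v : ℝ≥0) :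
    (gaussianReal 0 v).map Neg.neg = gaussianReal 0 v := by
  have := gaussianReal_map_const_mul (μ := 0) (v := v) (-1)
  simp only [neg_one_mul, mul_zero] at this
  rw [this]
  congr 1
  ext
  simp

lemma SU_conv {v : ℝ≥0} {g : ℝ → ℝ≥0∞} (hg : Measurable g) (hgle : ∀ y, g y ≤ 1)
    (hsu : SU g) : SU (fun y => ∫⁻ z, g (y + z) ∂gaussianReal 0 v) := by
  set I : ℝ → ℝ≥0∞ := fun y => ∫⁻ z, g (y + z) ∂gaussianReal 0 v with hI
  have hIrep : ∀ y : ℝ, I y = ∫⁻ w, g w ∂gaussianReal y v := by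
    intro y
    rw [hI]
    have hmap : (gaussianReal 0 v).map (y + ·) = gaussianReal y v := by
      rw [gaussianReal_map_const_add, zero_add]
    rw [← hmap, lintegral_map hg (measurable_const_add y)]
  have hIneg : ∀ y : ℝ, I (-y) = I y := by
    intro y
    rw [hI]
    simp only
    have hmn : (∫⁻ z, g (y + z) ∂gaussianReal 0 v)
        = ∫⁻ z, g (y + z) ∂((gaussianReal 0 v).map Neg.neg) := by
      rw [gaussianReal_map_neg]
    have hgm : Measurable fun z : ℝ => g (y + z) := hg.comp (measurable_const_add y)
    rw [hmn, lintegral_map hgm measurable_neg]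
    refine lintegral_congr fun z => ?_
    have : y + -z = -(-y + z) := by ring
    rw [this, hsu.even]
  have hmono : ∀ y₁ y₂ : ℝ, 0 ≤ y₁ → y₁ ≤ y₂ → I y₂ ≤ I y₁ := by
    intro y₁ y₂ h1 h12
    rw [hIrep, hIrep]
    have hlayer : ∀ y : ℝ, (∫⁻ w, g w ∂gaussianReal y v)
        = ∫⁻ t in Ioi (0:ℝ), gaussianReal y v {w | t < (g w).toReal} := by
      intro y
      rw [← lintegral_eq_lintegral_meas_lt _ (ae_of_all _ fun w => ENNReal.toReal_nonneg)
        hg.ennreal_toReal.aemeasurable]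
      refine lintegral_congr fun w => ?_
      rw [ENNReal.ofReal_toReal ((hgle w).trans_lt (by norm_num)).ne]
    rw [hlayer, hlayer]
    refine lintegral_mono fun t => ?_
    refine DC_le v ?_ ?_ h1 h12
    · exact measurableSet_lt measurable_const hg.ennreal_toReal
    · intro w hw z hz
      have hle : g w ≤ g z := hsu z w hz
      simp only [mem_setOf_eq] at hw ⊢
      refine lt_of_lt_of_le hw ?_
      exact ENNReal.toReal_le_toReal ((hgle w).trans_lt (by norm_num)).ne
        ((hgle z).trans_lt (by norm_num)).ne |>.2 hle
  intro y z hyz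
  have habs : ∀ w : ℝ, I w = I |w| := by
    intro w
    rcases abs_choice w with h | h
    · rw [h]
    · rw [h, hIneg]
  have hy : I y = I |y| := habs y
  have hz : I z = I |z| := habs z
  calc I z = I |z| := hz
    _ ≤ I |y| := hmono _ _ (abs_nonneg y) hyz
    _ = I y := hy.symm

noncomputable def hitP (ε : ℝ) : List ℝ≥0 → ℝ → ℝ≥0∞
  | [] => fun _ => 0
  | v :: vs => fun y =>
      ∫⁻ z, (if |y + z| ≤ ε then 1 else hitP ε vs (y + z)) ∂gaussianReal 0 v

lemma hitP_le_one (ε : ℝ) (L : List ℝ≥0) (y : ℝ) : hitP ε L y ≤ 1 := by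
  induction L generalizing y with
  | nil => simp [hitP]
  | cons v vs ih =>
    rw [hitP]
    calc (∫⁻ z, (if |y + z| ≤ ε then 1 else hitP ε vs (y + z)) ∂gaussianReal 0 v)
        ≤ ∫⁻ _, 1 ∂gaussianReal 0 v := by
          refine lintegral_mono fun z => ?_
          split
          · exact le_rfl
          · exact ih _
      _ = 1 := by simp

lemma measurable_hitP (ε : ℝ) (L : List ℝ≥0) : Measurable (hitP ε L) := by
  induction L with
  | nil =>
    unfold hitP
    exact measurable_const
  | cons v vs ih =>
    have hs : Measurable fun p : ℝ × ℝ => p.1 + p.2 := measurable_fst.add measurable_snd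
    have hF : Measurable fun p : ℝ × ℝ =>
        (if |p.1 + p.2| ≤ ε then 1 else hitP ε vs (p.1 + p.2)) := by
      refine Measurable.ite ?_ measurable_const (ih.comp hs)
      exact measurableSet_le (hs.abs) measurable_const
    exact hF.lintegral_prod_right'

lemma SU_hitP (ε : ℝ) (L : List ℝ≥0) : SU (hitP ε L) := by
  induction L with
  | nil => intro y z _; simp [hitP]
  | cons v vs ih =>
    have hg : SU fun w => if |w| ≤ ε then 1 else hitP ε vs w := by
      intro y z hyz
      by_cases hy : |y| ≤ ε
      · simp only [if_pos hy]
        split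
        · exact le_rfl
        · exact hitP_le_one ε vs z
      · have hz : ¬ |z| ≤ ε := fun h => hy (hyz.trans h)
        simp only [if_neg hy, if_neg hz]
        exact ih y z hyz
    have hgm : Measurable fun w => if |w| ≤ ε then (1:ℝ≥0∞) else hitP ε vs w := by
      refine Measurable.ite ?_ measurable_const (measurable_hitP ε vs)
      exact measurableSet_le measurable_abs measurable_const
    have hgle : ∀ w, (if |w| ≤ ε then (1:ℝ≥0∞) else hitP ε vs w) ≤ 1 := by
      intro w; split; exacts [le_rfl, hitP_le_one ε vs w]
    have := SU_conv (v := v) hgm hgle hg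
    intro y z hyz
    have h2 := this y z hyz
    simpa [hitP] using h2

variable {Ω : Type} [MeasurableSpace Ω] {P : Measure Ω} {B : ℝ → Ω → ℝ}

lemma hitP_rep (hB : IsStdBM P B) (ε : ℝ) :
    ∀ (n : ℕ) (s : Fin (n + 1) → ℝ), StrictMono s → 0 ≤ s 0 → ∀ x : ℝ,
    P {ω | ∃ i : Fin n, |x + (B (s i.succ) ω - B (s 0) ω)| ≤ ε}
      = hitP ε (List.ofFn fun i : Fin n => (s i.succ - s i.castSucc).toNNReal) x := by
  have hP : IsProbabilityMeasure P := hB.isProb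
  intro n
  induction n with
  | zero =>
    intro s _ _ x
    simp [hitP]
  | succ n IH =>
    intro s hsm hs0 x
    -- increments
    set W : Fin (n + 1) → Ω → ℝ :=
      fun j ω => B (s j.succ) ω - B (s j.castSucc) ω with hW
    have hWmeas : ∀ j, Measurable (W j) := fun j => (hB.meas _).sub (hB.meas _)
    have hIndep : iIndepFun W P :=
      hB.indepIncr (n + 1) s hsm.monotone (fun i => le_trans hs0 (hsm.monotone (Fin.zero_le i)))
    set Y : Ω → ℝ := fun ω => B (s 1) ω - B (s 0) ω with hY
    have hYW : Y = W 0 := by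
      funext ω; simp [hY, hW]
    have hYmeas : Measurable Y := (hB.meas _).sub (hB.meas _)
    set R : Ω → (Fin n → ℝ) := fun ω i => B (s i.succ.succ) ω - B (s 1) ω with hR
    have hRmeas : Measurable R :=
      measurable_pi_lambda _ fun i => (hB.meas _).sub (hB.meas _)
    -- telescoping
    have key : ∀ (i : Fin n) (ω : Ω),
        (∑ j ∈ Finset.univ.filter (fun j : Fin n => j ≤ i), W j.succ ω)
          = B (s i.succ.succ) ω - B (s 1) ω := by
      intro i ω
      set F : ℕ → ℝ := fun k => if h : k + 1 < n + 2 then B (s ⟨k + 1, h⟩) ω else 0 with hF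
      have h1 : (∑ j ∈ Finset.univ.filter (fun j : Fin n => j ≤ i), W j.succ ω)
          = ∑ k ∈ Finset.range (i.val + 1), (F (k + 1) - F k) := by
        refine Finset.sum_bij' (fun j _ => (j : Fin n).val) (fun k hk => (⟨k, by
          simp only [Finset.mem_range] at hk
          omega⟩ : Fin n)) ?_ ?_ ?_ ?_ ?_
        · intro a ha
          simp only [Finset.mem_filter, Finset.mem_univ, true_and] at ha
          simp only [Finset.mem_range]
          omega
        · intro k hk
          simp only [Finset.mem_range] at hk
          simp only [Finset.mem_filter, Finset.mem_univ, true_and]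
          rw [Fin.le_def]
          simp only
          omega
        · intro a ha; simp
        · intro k hk; simp
        · intro j hj
          simp only [Finset.mem_filter, Finset.mem_univ, true_and] at hj
          have hj1 : j.val + 1 < n + 2 := by omega
          have hj2 : j.val + 1 + 1 < n + 2 := by
            have := i.isLt; have := Fin.le_def.1 hj; omega
          have e1 : ((j : Fin n).succ : Fin (n + 1)).succ = (⟨j.val + 1 + 1, hj2⟩ : Fin (n + 2)) := by
            ext; simp
          have e2 : ((j : Fin n).succ : Fin (n + 1)).castSucc = (⟨j.val + 1, hj1⟩ : Fin (n + 2)) := by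
            ext; simp
          simp only [hF, hW, dif_pos hj1, dif_pos hj2, e1, e2]
      rw [h1, Finset.sum_range_sub F]
      have hv1 : i.val + 1 + 1 < n + 2 := by have := i.isLt; omega
      have hv0 : 0 + 1 < n + 2 := by omega
      have e1 : (i.succ.succ : Fin (n + 2)) = (⟨i.val + 1 + 1, hv1⟩ : Fin (n + 2)) := by
        ext; simp
      have e2 : ((1 : Fin (n + 2))) = (⟨0 + 1, hv0⟩ : Fin (n + 2)) := by
        ext; simp
      simp only [hF, dif_pos hv1, dif_pos hv0, e1, e2]
    -- independence of Y and R
    have hIndepYR : IndepFun Y R P := by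
      classical
      set T : Finset (Fin (n + 1)) := ({0} : Finset (Fin (n + 1)))ᶜ with hT
      have h0 := hIndep.indepFun_finset {0} T disjoint_compl_right hWmeas
      set φL : (({0} : Finset (Fin (n + 1))) → ℝ) → ℝ :=
        fun w => w ⟨0, by simp⟩ with hφL
      set φR : (T → ℝ) → (Fin n → ℝ) := fun w i =>
        ∑ j ∈ Finset.univ.filter (fun j : Fin n => j ≤ i),
          w ⟨j.succ, by simp [hT, Fin.succ_ne_zero]⟩ with hφR
      have hφLm : Measurable φL := measurable_pi_apply _
      have hφRm : Measurable φR :=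
        measurable_pi_lambda _ fun i => Finset.measurable_sum _ fun j _ => measurable_pi_apply _
      have h1 := h0.comp hφLm hφRm
      have hYeq : Y = φL ∘ (fun a (i : ({0} : Finset (Fin (n + 1)))) => W i a) := by
        funext ω; simp [hφL, hYW]
      have hReq : R = φR ∘ (fun a (i : T) => W i a) := by
        funext ω
        funext i
        simp only [hφR, Function.comp_apply, hR]
        exact (key i ω).symm
      rw [hYeq, hReq]
      exact h1
    -- the law of Y
    have hYlaw : P.map Y = gaussianReal 0 (s 1 - s 0).toNNReal := by
      have h01 : s 0 < s 1 := hsm (by norm_num)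
      have := hB.gaussIncr (s 0) (s 1 - s 0) hs0 (by linarith)
      have harg : (fun ω => B (s 0 + (s 1 - s 0)) ω - B (s 0) ω) = Y := by
        rw [show s 0 + (s 1 - s 0) = s 1 by ring]
      rwa [harg] at this
    -- the event
    set M : Set (ℝ × (Fin n → ℝ)) :=
      {p | |x + p.1| ≤ ε ∨ ∃ i : Fin n, |x + p.1 + p.2 i| ≤ ε} with hM
    have hMmeas : MeasurableSet M := by
      have : M = {p : ℝ × (Fin n → ℝ) | |x + p.1| ≤ ε}
          ∪ ⋃ i : Fin n, {p : ℝ × (Fin n → ℝ) | |x + p.1 + p.2 i| ≤ ε} := by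
        ext p; simp [hM]
      rw [this]
      refine MeasurableSet.union ?_ (MeasurableSet.iUnion fun i => ?_)
      · exact measurableSet_le ((measurable_const.add measurable_fst).abs) measurable_const
      · have hm : Measurable fun p : ℝ × (Fin n → ℝ) => |x + p.1 + p.2 i| := by
          apply Measurable.abs
          exact (measurable_const.add measurable_fst).add
            ((measurable_pi_apply i).comp measurable_snd)
        exact measurableSet_le hm measurable_const
    have hEvent : {ω | ∃ i : Fin (n + 1), |x + (B (s i.succ) ω - B (s 0) ω)| ≤ ε}
        = (fun ω => (Y ω, R ω)) ⁻¹' M := by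
      ext ω
      simp only [mem_setOf_eq, mem_preimage, hM]
      constructor
      · rintro ⟨i, hi⟩
        rcases Fin.eq_zero_or_eq_succ i with rfl | ⟨j, rfl⟩
        · left
          simpa [hY] using hi
        · right
          refine ⟨j, ?_⟩
          have : x + Y ω + R ω j = x + (B (s j.succ.succ) ω - B (s 0) ω) := by
            simp only [hY, hR]; ring
          rw [this]
          exact hi
      · rintro (h | ⟨j, hj⟩)
        · exact ⟨0, by simpa [hY] using h⟩
        · refine ⟨j.succ, ?_⟩
          have : x + (B (s j.succ.succ) ω - B (s 0) ω) = x + Y ω + R ω j := by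
            simp only [hY, hR]; ring
          rw [this]
          exact hj
    -- compute
    have hpair : P.map (fun ω => (Y ω, R ω)) = (P.map Y).prod (P.map R) :=
      (indepFun_iff_map_prod_eq_prod_map_map hYmeas.aemeasurable hRmeas.aemeasurable).1 hIndepYR
    have hPE : P {ω | ∃ i : Fin (n + 1), |x + (B (s i.succ) ω - B (s 0) ω)| ≤ ε}
        = ((P.map Y).prod (P.map R)) M := by
      rw [hEvent, ← hpair, Measure.map_apply (hYmeas.prodMk hRmeas) hMmeas]
    rw [hPE, Measure.prod_apply hMmeas, hYlaw]
    -- inner value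
    have hRprob : IsProbabilityMeasure (P.map R) := Measure.isProbabilityMeasure_map hRmeas.aemeasurable
    set s' : Fin (n + 1) → ℝ := fun j => s j.succ with hs'
    have hs'm : StrictMono s' := fun i j hij => hsm (by simpa using hij)
    have hs'0 : 0 ≤ s' 0 := le_trans hs0 (hsm.monotone (Fin.zero_le _))
    have hinner : ∀ z : ℝ, (P.map R) (Prod.mk z ⁻¹' M)
        = if |x + z| ≤ ε then 1
          else hitP ε (List.ofFn fun i : Fin n => (s' i.succ - s' i.castSucc).toNNReal) (x + z) := by
      intro z
      by_cases hz : |x + z| ≤ ε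
      · have : Prod.mk z ⁻¹' M = univ := by
          ext r; simp [hM, mem_preimage, hz]
        rw [this, if_pos hz]
        exact measure_univ
      · have hset : Prod.mk z ⁻¹' M = {r : Fin n → ℝ | ∃ i : Fin n, |x + z + r i| ≤ ε} := by
          ext r; simp [hM, mem_preimage, hz]
        rw [hset, if_neg hz]
        have hsm' : MeasurableSet {r : Fin n → ℝ | ∃ i : Fin n, |x + z + r i| ≤ ε} := by
          rw [show {r : Fin n → ℝ | ∃ i : Fin n, |x + z + r i| ≤ ε}
              = ⋃ i : Fin n, {r | |x + z + r i| ≤ ε} by ext r; simp]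
          refine MeasurableSet.iUnion fun i => ?_
          exact measurableSet_le ((measurable_const.add (measurable_pi_apply i)).abs)
            measurable_const
        rw [Measure.map_apply hRmeas hsm']
        have hpre : R ⁻¹' {r : Fin n → ℝ | ∃ i : Fin n, |x + z + r i| ≤ ε}
            = {ω | ∃ i : Fin n, |(x + z) + (B (s' i.succ) ω - B (s' 0) ω)| ≤ ε} := rfl
        rw [hpre, IH s' hs'm hs'0 (x + z)]
    calc (∫⁻ z, (P.map R) (Prod.mk z ⁻¹' M) ∂gaussianReal 0 (s 1 - s 0).toNNReal)
        = ∫⁻ z, (if |x + z| ≤ ε then 1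
            else hitP ε (List.ofFn fun i : Fin n => (s' i.succ - s' i.castSucc).toNNReal) (x + z))
            ∂gaussianReal 0 (s 1 - s 0).toNNReal := lintegral_congr fun z => hinner z
      _ = hitP ε (((s 1 - s 0).toNNReal)
            :: (List.ofFn fun i : Fin n => (s' i.succ - s' i.castSucc).toNNReal)) x := by
          rw [hitP]
      _ = hitP ε (List.ofFn fun i : Fin (n + 1) => (s i.succ - s i.castSucc).toNNReal) x := by
          have hl : ((s 1 - s 0).toNNReal)
              :: (List.ofFn fun i : Fin n => (s' i.succ - s' i.castSucc).toNNReal)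
              = List.ofFn fun i : Fin (n + 1) => (s i.succ - s i.castSucc).toNNReal := by
            rw [List.ofFn_succ]
            have h0 : (s (0 : Fin (n + 1)).succ - s (0 : Fin (n + 1)).castSucc).toNNReal
                = (s 1 - s 0).toNNReal := by simp
            rw [h0]
            congr 1
          rw [hl]

lemma finLE (hB : IsStdBM P B) {m : ℕ} (t : Fin m → ℝ) (hsm : StrictMono t)
    (hpos : ∀ i, 0 < t i) (ε x : ℝ) :
    P {ω | ∃ i : Fin m, |x + B (t i) ω| ≤ ε} ≤ P {ω | ∃ i : Fin m, |B (t i) ω| ≤ ε} := by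
  set s : Fin (m + 1) → ℝ := Fin.cons 0 t with hs
  have hssm : StrictMono s := by
    rw [Fin.strictMono_iff_lt_succ]
    rintro ⟨iv, hiv⟩
    cases iv with
    | zero =>
      have e1 : Fin.castSucc (⟨0, hiv⟩ : Fin m) = (0 : Fin (m + 1)) := by ext; simp
      have e2 : s (Fin.succ (⟨0, hiv⟩ : Fin m)) = t ⟨0, hiv⟩ := Fin.cons_succ _ _ _
      rw [e1, e2]
      simpa [hs] using hpos ⟨0, hiv⟩
    | succ k =>
      have hk : k < m := by omega
      have e1 : Fin.castSucc (⟨k + 1, hiv⟩ : Fin m) = Fin.succ (⟨k, hk⟩ : Fin m) := by ext; simp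
      have e2 : s (Fin.succ (⟨k, hk⟩ : Fin m)) = t ⟨k, hk⟩ := Fin.cons_succ _ _ _
      have e3 : s (Fin.succ (⟨k + 1, hiv⟩ : Fin m)) = t ⟨k + 1, hiv⟩ := Fin.cons_succ _ _ _
      rw [e1, e2, e3]
      exact hsm (by simp [Fin.lt_def])
  have hs0 : (0:ℝ) ≤ s 0 := by simp [hs]
  have hcongr : ∀ y : ℝ, P {ω | ∃ i : Fin m, |y + B (t i) ω| ≤ ε}
      = P {ω | ∃ i : Fin m, |y + (B (s i.succ) ω - B (s 0) ω)| ≤ ε} := by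
    intro y
    refine measure_congr ?_
    filter_upwards [hB.start] with ω h0
    have : (∃ i : Fin m, |y + B (t i) ω| ≤ ε)
        ↔ (∃ i : Fin m, |y + (B (s i.succ) ω - B (s 0) ω)| ≤ ε) := by
      simp [hs, h0]
    exact propext this
  have h1 := hitP_rep hB ε m s hssm hs0 x
  have h2 := hitP_rep hB ε m s hssm hs0 0
  have key : hitP ε (List.ofFn fun i : Fin m => (s i.succ - s i.castSucc).toNNReal) x
      ≤ hitP ε (List.ofFn fun i : Fin m => (s i.succ - s i.castSucc).toNNReal) 0 :=
    SU_hitP ε _ 0 x (by simp)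
  calc P {ω | ∃ i : Fin m, |x + B (t i) ω| ≤ ε}
      = hitP ε (List.ofFn fun i : Fin m => (s i.succ - s i.castSucc).toNNReal) x := by
        rw [hcongr x, h1]
    _ ≤ hitP ε (List.ofFn fun i : Fin m => (s i.succ - s i.castSucc).toNNReal) 0 := key
    _ = P {ω | ∃ i : Fin m, |B (t i) ω| ≤ ε} := by
        rw [← h2, ← hcongr 0]
        simp

end BMZero

open BMZero

/-- The probability that Brownian motion started at `0` has a zero in `[a,b]`
is at least the probability that Brownian motion started at `x` has a zero in `[a,b]`. -/
theorem stmt_0 {Ω : Type} [MeasurableSpace Ω] (P : Measure Ω) (B : ℝ → Ω → ℝ)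
    (hB : IsStdBM P B) (x : ℝ) (a b : ℝ) (ha : 0 ≤ a) (hab : a ≤ b) :
    P {ω | ∃ s ∈ Icc a b, x + B s ω = 0} ≤ P {ω | ∃ s ∈ Icc a b, B s ω = 0} := by
  have hP : IsProbabilityMeasure P := hB.isProb
  set C : Set Ω := {ω | ContinuousOn (fun t => B t ω) (Ici 0)} with hC
  have hCc : P Cᶜ = 0 := by
    have h := hB.cont
    rw [ae_iff] at h
    exact h
  have hstart0 : P {ω | ¬ B 0 ω = 0} = 0 := by
    have h := hB.start
    rw [ae_iff] at h
    exact h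
  rcases eq_or_lt_of_le hab with rfl | hlt
  · -- degenerate interval
    rcases eq_or_lt_of_le ha with rfl | hapos
    · -- a = 0 : RHS has probability 1
      have h1 : P {ω | B 0 ω = 0} = 1 := by
        have hm : MeasurableSet {ω | B 0 ω = 0} := (hB.meas 0) (measurableSet_singleton 0)
        rw [← prob_compl_eq_zero_iff hm]
        simpa [compl_setOf] using hstart0
      calc P {ω | ∃ s ∈ Icc (0:ℝ) 0, x + B s ω = 0} ≤ 1 := prob_le_one
        _ = P {ω | B 0 ω = 0} := h1.symm
        _ ≤ P {ω | ∃ s ∈ Icc (0:ℝ) 0, B s ω = 0} := by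
            apply measure_mono
            intro ω h
            exact ⟨0, ⟨le_rfl, le_rfl⟩, h⟩
    · -- 0 < a : LHS has probability 0
      have hsub : {ω | ∃ s ∈ Icc a a, x + B s ω = 0}
          ⊆ {ω | B a ω - B 0 ω = -x} ∪ {ω | ¬ B 0 ω = 0} := by
        rintro ω ⟨s, hs, h⟩
        have hsa : s = a := le_antisymm hs.2 hs.1
        subst hsa
        by_cases h0 : B 0 ω = 0
        · left
          simp only [mem_setOf_eq]
          rw [h0]
          linarith
        · right; exact h0
      have hgauss : P {ω | B a ω - B 0 ω = -x} = 0 := by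
        have hmap := hB.gaussIncr 0 a le_rfl hapos
        rw [zero_add] at hmap
        have hmeas : Measurable fun ω => B a ω - B 0 ω := (hB.meas a).sub (hB.meas 0)
        have : {ω | B a ω - B 0 ω = -x} = (fun ω => B a ω - B 0 ω) ⁻¹' {-x} := by
          ext ω; simp
        rw [this, ← Measure.map_apply hmeas (measurableSet_singleton _), hmap]
        exact gauss_noatom (fun h => absurd (Real.toNNReal_eq_zero.1 h) (not_le.2 hapos)) 0 (-x)
      calc P {ω | ∃ s ∈ Icc a a, x + B s ω = 0}
          ≤ P {ω | B a ω - B 0 ω = -x} + P {ω | ¬ B 0 ω = 0} :=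
            le_trans (measure_mono hsub) (measure_union_le _ _)
        _ = 0 := by rw [hgauss, hstart0, add_zero]
        _ ≤ P {ω | ∃ s ∈ Icc a a, B s ω = 0} := zero_le
  · -- main case : a < b
    set e : ℕ → ℝ := fun k => 1 / ((k : ℝ) + 1) with he
    have hepos : ∀ k, 0 < e k := fun k => by positivity
    set D : ℝ → ℕ → Set Ω := fun y k =>
      {ω | ∃ q : ℚ, (a < (q:ℝ) ∧ (q:ℝ) ≤ b) ∧ |y + B q ω| ≤ e k} with hD
    have hDmeas : ∀ y k, MeasurableSet (D y k) := by
      intro y k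
      have : D y k = ⋃ q : ℚ, ⋃ (_ : a < (q:ℝ) ∧ (q:ℝ) ≤ b), {ω | |y + B q ω| ≤ e k} := by
        ext ω; simp [hD]
      rw [this]
      exact MeasurableSet.iUnion fun q => MeasurableSet.iUnion fun _ =>
        measurableSet_le ((measurable_const.add (hB.meas _)).abs) measurable_const
    -- Step 1
    have hstep1 : ∀ y : ℝ, {ω | ∃ s ∈ Icc a b, y + B s ω = 0} ∩ C ⊆ ⋂ k, D y k := by
      intro y ω ⟨⟨s, hs, hzero⟩, hc⟩
      rw [mem_iInter]
      intro k
      have hs0 : (0:ℝ) ≤ s := le_trans ha hs.1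
      have hcw : ContinuousWithinAt (fun t => B t ω) (Ici 0) s := hc s hs0
      rw [Metric.continuousWithinAt_iff] at hcw
      obtain ⟨δ, hδ, hball⟩ := hcw (e k) (hepos k)
      have hmaxmin : max a (s - δ) < min b (s + δ) := by
        apply max_lt <;> apply lt_min
        · exact hlt
        · linarith [hs.1]
        · linarith [hs.2]
        · linarith
      obtain ⟨q, hq1, hq2⟩ := exists_rat_btwn hmaxmin
      have hqa : a < (q:ℝ) := lt_of_le_of_lt (le_max_left _ _) hq1
      have hqb : (q:ℝ) ≤ b := le_of_lt (lt_of_lt_of_le hq2 (min_le_left _ _))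
      have hq0 : (q:ℝ) ∈ Ici (0:ℝ) := le_trans ha hqa.le
      have hdist : dist (q:ℝ) s < δ := by
        rw [Real.dist_eq, abs_sub_lt_iff]
        constructor
        · have := lt_of_lt_of_le hq2 (min_le_right _ _); linarith
        · have := lt_of_le_of_lt (le_max_right _ _) hq1; linarith
      have hB' := hball hq0 hdist
      refine ⟨q, ⟨hqa, hqb⟩, ?_⟩
      have hBs : B s ω = -y := by linarith
      have : |y + B (q:ℝ) ω| = dist (B (q:ℝ) ω) (B s ω) := by
        rw [Real.dist_eq, hBs]
        congr 1
        ring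
      rw [this]
      exact hB'.le
    -- Step 2
    have hstep2 : ∀ k, P (D x k) ≤ P (D 0 k) := by
      intro k
      set Q := {q : ℚ // a < (q:ℝ) ∧ (q:ℝ) ≤ b} with hQ
      set S : ℝ → Finset Q → Set Ω := fun y F =>
        {ω | ∃ q ∈ F, |y + B ((q:ℚ):ℝ) ω| ≤ e k} with hS
      have hSmono : ∀ y, Monotone (S y) := by
        intro y F G hFG ω ⟨q, hq, h⟩
        exact ⟨q, hFG hq, h⟩
      have hdir : ∀ y, Directed (· ⊆ ·) (S y) := fun y =>
        (hSmono y).directed_le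
      have hunion : ∀ y, (⋃ F, S y F) = D y k := by
        intro y
        ext ω
        simp only [mem_iUnion, hS, hD, mem_setOf_eq]
        constructor
        · rintro ⟨F, q, hq, h⟩
          exact ⟨(q:ℚ), q.2, h⟩
        · rintro ⟨q, hq, h⟩
          exact ⟨{⟨q, hq⟩}, ⟨q, hq⟩, Finset.mem_singleton_self _, h⟩
      have hSle : ∀ F : Finset Q, P (S x F) ≤ P (S 0 F) := by
        intro F
        set F' : Finset ℝ := F.image (fun q : Q => ((q : ℚ) : ℝ)) with hF'
        set m := F'.card with hm
        set t : Fin m → ℝ := fun i => ((F'.orderIsoOfFin rfl i : ℝ)) with ht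
        have htmem : ∀ i, t i ∈ F' := fun i => (F'.orderIsoOfFin rfl i).2
        have hsm : StrictMono t := fun i j hij =>
          Subtype.coe_lt_coe.2 ((F'.orderIsoOfFin rfl).strictMono hij)
        have hpos : ∀ i, 0 < t i := by
          intro i
          obtain ⟨q, hq, hqe⟩ := Finset.mem_image.1 (htmem i)
          have := q.2.1
          rw [← hqe]
          exact lt_of_le_of_lt ha this
        have hset : ∀ y : ℝ, S y F = {ω | ∃ i : Fin m, |y + B (t i) ω| ≤ e k} := by
          intro y
          ext ω
          simp only [hS, mem_setOf_eq]
          constructor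
          · rintro ⟨q, hq, h⟩
            have hmem : ((q:ℚ):ℝ) ∈ F' := Finset.mem_image_of_mem _ hq
            refine ⟨(F'.orderIsoOfFin rfl).symm ⟨_, hmem⟩, ?_⟩
            have h2 := (F'.orderIsoOfFin rfl).apply_symm_apply ⟨((q:ℚ):ℝ), hmem⟩
            have : t ((F'.orderIsoOfFin rfl).symm ⟨_, hmem⟩) = ((q:ℚ):ℝ) := by
              simp only [ht]
              exact congrArg Subtype.val h2
            rw [this]
            exact h
          · rintro ⟨i, h⟩
            obtain ⟨q, hq, hqe⟩ := Finset.mem_image.1 (htmem i)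
            refine ⟨q, hq, ?_⟩
            rw [hqe]
            exact h
        have hz : {ω | ∃ i : Fin m, |(0:ℝ) + B (t i) ω| ≤ e k}
            = {ω | ∃ i : Fin m, |B (t i) ω| ≤ e k} := by simp
        rw [hset x, hset 0, hz]
        exact finLE hB t hsm hpos (e k) x
      have hx : P (D x k) = ⨆ F, P (S x F) := by
        rw [← hunion x, (hdir x).measure_iUnion]
      rw [hx]
      refine iSup_le fun F => ?_
      calc P (S x F) ≤ P (S 0 F) := hSle F
        _ ≤ P (D 0 k) := by
            rw [← hunion 0]
            exact measure_mono (subset_iUnion (S 0) F)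
    -- Step 3
    have hstep3 : (⋂ k, D 0 k) ∩ C ⊆ {ω | ∃ s ∈ Icc a b, B s ω = 0} := by
      rintro ω ⟨hG, hc⟩
      rw [mem_iInter] at hG
      have hex : ∀ k, ∃ q : ℚ, (a < (q:ℝ) ∧ (q:ℝ) ≤ b) ∧ |(0:ℝ) + B q ω| ≤ e k := fun k => hG k
      choose u hu1 hu2 using hex
      set ur : ℕ → ℝ := fun k => ((u k : ℚ) : ℝ) with hur
      have hmem : ∀ k, ur k ∈ Icc a b := fun k => ⟨(hu1 k).1.le, (hu1 k).2⟩
      obtain ⟨s, hsmem, φ, hφ, hlim⟩ := (isCompact_Icc (a := a) (b := b)).tendsto_subseq hmem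
      have hcw : ContinuousWithinAt (fun t => B t ω) (Ici 0) s := hc s (le_trans ha hsmem.1)
      have htend : Filter.Tendsto (fun k => B (ur (φ k)) ω) Filter.atTop (nhds (B s ω)) := by
        refine hcw.tendsto.comp ?_
        rw [tendsto_nhdsWithin_iff]
        exact ⟨hlim, Filter.Eventually.of_forall fun k => le_trans ha (hu1 _).1.le⟩
      have htend0 : Filter.Tendsto (fun k => B (ur (φ k)) ω) Filter.atTop (nhds 0) := by
        refine squeeze_zero_norm ?_ tendsto_one_div_add_atTop_nhds_zero_nat
        intro k
        show ‖B (ur (φ k)) ω‖ ≤ 1 / ((k:ℝ) + 1)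
        have hek : e k = 1 / ((k:ℝ) + 1) := rfl
        rw [← hek]
        have h1 : |B (ur (φ k)) ω| ≤ e (φ k) := by
          have := hu2 (φ k)
          rwa [zero_add] at this
        refine h1.trans ?_
        rw [he]
        apply one_div_le_one_div_of_le (by positivity)
        have hcast : (k:ℝ) ≤ (φ k : ℝ) := by exact_mod_cast hφ.le_apply
        linarith
      have : B s ω = 0 := tendsto_nhds_unique htend htend0
      exact ⟨s, hsmem, this⟩
    -- assembly
    have hanti : Antitone (fun k => D 0 k) := by
      intro k k' hkk' ω hω
      obtain ⟨q, hq, h⟩ := hω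
      refine ⟨q, hq, h.trans ?_⟩
      rw [he]
      apply one_div_le_one_div_of_le (by positivity)
      have : (k:ℝ) ≤ (k':ℝ) := by exact_mod_cast hkk'
      linarith
    have hInter : P (⋂ k, D 0 k) = ⨅ k, P (D 0 k) := by
      refine Directed.measure_iInter (fun k => (hDmeas 0 k).nullMeasurableSet) ?_
        ⟨0, measure_ne_top P _⟩
      intro k k'
      exact ⟨max k k', hanti (le_max_left _ _), hanti (le_max_right _ _)⟩
    calc P {ω | ∃ s ∈ Icc a b, x + B s ω = 0}
        ≤ P ((⋂ k, D x k) ∪ Cᶜ) := by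
          apply measure_mono
          intro ω h
          by_cases hc : ω ∈ C
          · exact Or.inl (hstep1 x ⟨h, hc⟩)
          · exact Or.inr hc
      _ ≤ P (⋂ k, D x k) + P Cᶜ := measure_union_le _ _
      _ = P (⋂ k, D x k) := by rw [hCc, add_zero]
      _ ≤ P (⋂ k, D 0 k) := by
          rw [hInter]
          refine le_iInf fun k => ?_
          exact le_trans (measure_mono (iInter_subset _ k)) (hstep2 k)
      _ ≤ P ({ω | ∃ s ∈ Icc a b, B s ω = 0} ∪ Cᶜ) := by
          apply measure_mono
          intro ω h
          by_cases hc : ω ∈ C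
          · exact Or.inl (hstep3 ⟨h, hc⟩)
          · exact Or.inr hc
      _ ≤ P {ω | ∃ s ∈ Icc a b, B s ω = 0} + P Cᶜ := measure_union_le _ _
      _ = P {ω | ∃ s ∈ Icc a b, B s ω = 0} := by rw [hCc, add_zero]
end

section
/- Let β > α ≥ 0 and let μ be a finite Borel measure on ℝ such that μ(A) ≤ c·|A|^β for every interval A (where |A| denotes the length of A) and some constant c > 0. Then μ has finite α-energy, i.e., ∫∫ |x−y|^{−α} dμ(x) dμ(y) < ∞. -/
open MeasureTheory Set
open scoped ENNReal

/-- If `β > α ≥ 0` and `μ` is a finite Borel measure on `ℝ` with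
`μ(A) ≤ c·|A|^β` for every interval `A`, then `μ` has finite `α`-energy:
`∫∫ |x−y|^(−α) dμ(x) dμ(y) < ∞`. -/
theorem stmt_2 (μ : Measure ℝ) [IsFiniteMeasure μ] (α β c : ℝ)
    (hα : 0 ≤ α) (hβ : α < β) (hc : 0 < c)
    (hμ : ∀ x y : ℝ, x ≤ y → μ (Icc x y) ≤ ENNReal.ofReal (c * (y - x) ^ β)) :
    ∫⁻ x, ∫⁻ y, (ENNReal.ofReal |x - y|) ^ (-α) ∂μ ∂μ < ⊤ := by
  have hβ0 : (0:ℝ) < β := lt_of_le_of_lt hα hβ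
  rcases eq_or_lt_of_le hα with h0 | hα'
  · -- α = 0 : integrand is 1
    simp only [← h0, neg_zero, ENNReal.rpow_zero, lintegral_const, lintegral_one]
    exact ENNReal.mul_lt_top (ENNReal.mul_lt_top ENNReal.one_lt_top (measure_lt_top _ _))
      (measure_lt_top _ _)
  -- points have measure zero
  have hpt : ∀ x : ℝ, μ {x} = 0 := by
    intro x
    have h := hμ x x le_rfl
    simp only [sub_self, Real.zero_rpow hβ0.ne', mul_zero, ENNReal.ofReal_zero, Icc_self] at h
    exact le_antisymm h bot_le
  -- tail integral
  set T : ℝ≥0∞ := ∫⁻ t in Ioi (1:ℝ), ENNReal.ofReal (c * 2 ^ β * t ^ (-(β/α))) with hT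
  have hTlt : T < ⊤ := by
    have hexp : -(β/α) < -1 := by
      have : (1:ℝ) < β / α := (one_lt_div hα').mpr hβ
      linarith
    have hint : IntegrableOn (fun t : ℝ => c * 2 ^ β * t ^ (-(β/α))) (Ioi 1) :=
      (integrableOn_Ioi_rpow_of_lt hexp one_pos).const_mul _
    exact lt_of_le_of_lt (lintegral_ofReal_le_lintegral_enorm _) hint.2
  set C : ℝ≥0∞ := μ Set.univ + T with hC
  have hClt : C < ⊤ := ENNReal.add_lt_top.mpr ⟨measure_lt_top _ _, hTlt⟩
  -- inner integral bound
  have key : ∀ x : ℝ, ∫⁻ y, (ENNReal.ofReal |x - y|) ^ (-α) ∂μ ≤ C := by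
    intro x
    have hae : ∀ᵐ y ∂μ, (ENNReal.ofReal |x - y|) ^ (-α) = ENNReal.ofReal (|x - y| ^ (-α)) := by
      have : ∀ᵐ y ∂μ, y ≠ x := by
        rw [ae_iff]
        simpa using hpt x
      filter_upwards [this] with y hy
      have h0 : 0 < |x - y| := abs_pos.mpr (sub_ne_zero.mpr (Ne.symm hy))
      exact ENNReal.ofReal_rpow_of_pos h0
    rw [lintegral_congr_ae hae]
    have hmble : Measurable fun y : ℝ => |x - y| ^ (-α) :=
      ((measurable_const.sub measurable_id).abs).pow_const _
    rw [lintegral_eq_lintegral_meas_lt μ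
      (Filter.Eventually.of_forall fun y => Real.rpow_nonneg (abs_nonneg _) _)
      hmble.aemeasurable]
    -- split at t = 1
    rw [← Ioc_union_Ioi_eq_Ioi (zero_le_one (α := ℝ)),
      lintegral_union measurableSet_Ioi (Ioc_disjoint_Ioi le_rfl)]
    have h1 : ∫⁻ t in Ioc (0:ℝ) 1, μ {y | t < |x - y| ^ (-α)} ≤ μ Set.univ := by
      calc ∫⁻ t in Ioc (0:ℝ) 1, μ {y | t < |x - y| ^ (-α)}
          ≤ ∫⁻ _ in Ioc (0:ℝ) 1, μ Set.univ := lintegral_mono fun t => measure_mono (subset_univ _)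
        _ = μ Set.univ * volume (Ioc (0:ℝ) 1) := setLIntegral_const _ _
        _ = μ Set.univ := by simp
    have h2 : ∫⁻ t in Ioi (1:ℝ), μ {y | t < |x - y| ^ (-α)} ≤ T := by
      apply setLIntegral_mono (((measurable_id.pow_const _).const_mul _).ennreal_ofReal)
      intro t ht
      have ht0 : (0:ℝ) < t := lt_trans one_pos ht
      set s : ℝ := t ^ (-(1/α)) with hs
      have hs0 : 0 ≤ s := Real.rpow_nonneg ht0.le _
      have hsub : {y : ℝ | t < |x - y| ^ (-α)} ⊆ Icc (x - s) (x + s) := by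
        intro y hy
        simp only [mem_setOf_eq] at hy
        have hr0 : 0 < |x - y| := by
          rcases eq_or_lt_of_le (abs_nonneg (x - y)) with h | h
          · rw [← h, Real.zero_rpow (neg_ne_zero.mpr hα'.ne')] at hy
            exact absurd hy (not_lt.mpr ht0.le)
          · exact h
        have hlt : |x - y| < s := by
          have h1' : |x - y| ^ α < t⁻¹ := by
            rw [Real.rpow_neg (abs_nonneg _)] at hy
            have hpow : 0 < |x - y| ^ α := Real.rpow_pos_of_pos hr0 _
            rw [lt_inv_comm₀ ht0 hpow] at hy
            exact hy
          have h2' := Real.rpow_lt_rpow (Real.rpow_nonneg (abs_nonneg _) _) h1'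
            (one_div_pos.mpr hα')
          rwa [← Real.rpow_mul (abs_nonneg _), mul_one_div_cancel hα'.ne', Real.rpow_one,
            ← Real.rpow_neg_one t, ← Real.rpow_mul ht0.le, neg_one_mul] at h2'
        have := abs_lt.mp hlt
        constructor <;> linarith [this.1, this.2]
      calc μ {y : ℝ | t < |x - y| ^ (-α)} ≤ μ (Icc (x - s) (x + s)) := measure_mono hsub
        _ ≤ ENNReal.ofReal (c * ((x + s) - (x - s)) ^ β) := hμ _ _ (by linarith)
        _ = ENNReal.ofReal (c * 2 ^ β * t ^ (-(β/α))) := by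
            congr 1
            have h2s : (x + s) - (x - s) = 2 * s := by ring
            rw [h2s, Real.mul_rpow (by norm_num) hs0, hs, ← Real.rpow_mul ht0.le,
              show -(1/α) * β = -(β/α) by ring]
            ring
      
    calc _ ≤ μ Set.univ + T := add_le_add h1 h2
      _ = C := rfl
  calc ∫⁻ x, ∫⁻ y, (ENNReal.ofReal |x - y|) ^ (-α) ∂μ ∂μ ≤ ∫⁻ _, C ∂μ := lintegral_mono key
    _ = C * μ Set.univ := lintegral_const C
    _ < ⊤ := ENNReal.mul_lt_top hClt (measure_lt_top _ _)
end

section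
/- Let α > 0, let f : ℕ → ℕ be a function such that Σ_n 2^{−f(n)} < ∞, and let μ be a Borel measure on [0,1] such that for every n and every interval A of length at most 2^{−n}, μ(A) ≤ 2^{−α·n − f(n)}. Then μ has finite α-energy, i.e., ∫∫ |x−y|^{−α} dμ(x) dμ(y) < ∞. -/
open MeasureTheory Set
open scoped ENNReal
set_option maxHeartbeats 1000000

/-- Refined energy estimate: if `Σ_n 2^(−f n) < ∞` and `μ` is a Borel measure on
`[0,1]` with `μ(A) ≤ 2^(−α·n − f n)` for every interval `A` of length at most
`2^(−n)`, then `μ` has finite `α`-energy. -/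
theorem stmt_3 (α : ℝ) (hα : 0 < α) (f : ℕ → ℕ)
    (hf : Summable fun n : ℕ => (2 : ℝ) ^ (-(f n : ℝ)))
    (μ : Measure ℝ) (hsupp : μ (Icc (0 : ℝ) 1)ᶜ = 0)
    (hμ : ∀ (n : ℕ) (x y : ℝ), x ≤ y → y - x ≤ (2 : ℝ) ^ (-(n : ℝ)) →
      μ (Icc x y) ≤ ENNReal.ofReal ((2 : ℝ) ^ (-(α * n) - (f n : ℝ)))) :
    ∫⁻ x, ∫⁻ y, (ENNReal.ofReal |x - y|) ^ (-α) ∂μ ∂μ < ⊤ := by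
  set r : ℕ → ℝ := fun n => (2 : ℝ) ^ (-(n : ℝ) - 1) with hr
  have hrpos : ∀ n, 0 < r n := fun n => Real.rpow_pos_of_pos two_pos _
  set c : ℕ → ℝ≥0∞ := fun n => ENNReal.ofReal ((2 : ℝ) ^ (α * ((n : ℝ) + 2))) with hc
  -- total mass is finite
  have hM : μ Set.univ < ⊤ := by
    have h0 : μ (Icc (0:ℝ) 1) ≤ ENNReal.ofReal ((2:ℝ) ^ (-(α * 0) - ((f 0 : ℕ) : ℝ))) := by
      have := hμ 0 0 1 zero_le_one (by norm_num)
      simpa using this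
    have huniv : μ Set.univ = μ (Icc (0:ℝ) 1) := by
      rw [← measure_add_measure_compl measurableSet_Icc, hsupp, add_zero]
    rw [huniv]
    exact h0.trans_lt ENNReal.ofReal_lt_top
  -- pointwise bound
  have key : ∀ x y : ℝ, (ENNReal.ofReal |x - y|) ^ (-α) ≤
      ENNReal.ofReal ((2:ℝ) ^ α) +
      ∑' n : ℕ, Set.indicator (Icc (x - r n) (x + r n)) (fun _ => c n) y := by
    intro x y
    have hmem : ∀ n, y ∈ Icc (x - r n) (x + r n) ↔ |x - y| ≤ r n := by
      intro n
      rw [abs_sub_comm, abs_le]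
      constructor <;> (intro h; constructor <;> [linarith [h.1, h.2]; linarith [h.1, h.2]])
    rcases eq_or_lt_of_le (abs_nonneg (x - y)) with h0 | hpos
    · -- |x-y| = 0 : RHS is ⊤
      have htop : (∑' n : ℕ, Set.indicator (Icc (x - r n) (x + r n)) (fun _ => c n) y) = ⊤ := by
        refine top_le_iff.mp ?_
        calc (⊤ : ℝ≥0∞) = ∑' _ : ℕ, (1 : ℝ≥0∞) := (ENNReal.tsum_const_eq_top_of_ne_zero one_ne_zero).symm
          _ ≤ _ := by
            refine ENNReal.tsum_le_tsum fun n => ?_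
            have hy : y ∈ Icc (x - r n) (x + r n) := (hmem n).mpr (by rw [← h0]; exact (hrpos n).le)
            rw [Set.indicator_of_mem hy]
            simp only [hc]
            rw [← ENNReal.ofReal_one]
            exact ENNReal.ofReal_le_ofReal (Real.one_le_rpow one_le_two (by positivity))
        
      rw [htop]
      simp
    · -- |x-y| > 0
      rw [ENNReal.ofReal_rpow_of_pos hpos]
      rcases le_or_gt |x - y| (1/2) with hsmall | hbig
      · -- find dyadic scale
        have hex : ∃ n : ℕ, r n < |x - y| := by
          obtain ⟨n, hn⟩ := exists_pow_lt_of_lt_one hpos (by norm_num : (1:ℝ)/2 < 1)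
          refine ⟨n, lt_of_le_of_lt ?_ hn⟩
          have : ((1:ℝ)/2) ^ n = (2:ℝ) ^ (-(n:ℝ)) := by
            rw [Real.rpow_neg (by norm_num), Real.rpow_natCast, one_div, inv_pow]
          rw [this, hr]
          exact Real.rpow_le_rpow_of_exponent_le one_le_two (by linarith)
        classical
        obtain ⟨k, hklt, hmin⟩ : ∃ k : ℕ, r k < |x - y| ∧ ∀ m < k, ¬ r m < |x - y| :=
          ⟨Nat.find hex, Nat.find_spec hex, fun m hm => Nat.find_min hex hm⟩
        have hk1 : 1 ≤ k := by
          by_contra h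
          push_neg at h
          have h0 : k = 0 := by omega
          have hr0 : r 0 = 1/2 := by
            have h1 : r 0 = (2:ℝ) ^ (-1 : ℝ) := by rw [hr]; norm_num
            rw [h1, Real.rpow_neg_one]; norm_num
          rw [h0, hr0] at hklt; linarith
        have hkle : |x - y| ≤ (2:ℝ) ^ (-(k:ℝ)) := by
          have := hmin (k - 1) (by omega)
          push_neg at this
          have heq : r (k-1) = (2:ℝ) ^ (-(k:ℝ)) := by
            have hcast : ((k - 1 : ℕ) : ℝ) = (k : ℝ) - 1 := by
              have := Nat.cast_sub (R := ℝ) hk1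
              simpa using this
            show (2:ℝ) ^ (-((k-1:ℕ):ℝ) - 1) = (2:ℝ) ^ (-(k:ℝ))
            rw [hcast]; ring_nf
          rw [← heq]; exact this
        -- bound by the term n = k - 1
        have hbound : (|x - y|) ^ (-α) ≤ (2:ℝ) ^ (α * ((((k:ℕ) - 1 : ℕ) : ℝ) + 2)) := by
          have h1 : (|x - y|) ^ (-α) ≤ (r k) ^ (-α) :=
            Real.rpow_le_rpow_of_nonpos (hrpos k) hklt.le (by linarith)
          refine h1.trans ?_
          have : (r k) ^ (-α) = (2:ℝ) ^ ((-(k:ℝ) - 1) * (-α)) := by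
            rw [hr, ← Real.rpow_mul (by norm_num)]
          rw [this]
          apply Real.rpow_le_rpow_of_exponent_le one_le_two
          have hcast : ((k - 1 : ℕ) : ℝ) = (k : ℝ) - 1 := by
            have := Nat.cast_sub (R := ℝ) hk1
            simpa using this
          rw [hcast]
          ring_nf
          linarith
        have hymem : y ∈ Icc (x - r (k-1)) (x + r (k-1)) := by
          refine (hmem _).mpr ?_
          refine hkle.trans ?_
          rw [hr]
          apply le_of_eq
          congr 1
          have hcast : ((k - 1 : ℕ) : ℝ) = (k : ℝ) - 1 := by
            have := Nat.cast_sub (R := ℝ) hk1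
            simpa using this
          rw [hcast]; ring
        calc ENNReal.ofReal (|x - y| ^ (-α)) ≤ c (k-1) := by
              rw [hc]; exact ENNReal.ofReal_le_ofReal hbound
          _ = Set.indicator (Icc (x - r (k-1)) (x + r (k-1))) (fun _ => c (k-1)) y := by
              rw [Set.indicator_of_mem hymem]
          _ ≤ ∑' n : ℕ, Set.indicator (Icc (x - r n) (x + r n)) (fun _ => c n) y :=
              ENNReal.le_tsum _
          _ ≤ _ := le_add_self
      · -- |x - y| > 1/2 : bound by constant term
        have : (|x - y|) ^ (-α) ≤ (2:ℝ) ^ α := by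
          have h1 : (|x - y|) ^ (-α) ≤ ((1:ℝ)/2) ^ (-α) :=
            Real.rpow_le_rpow_of_nonpos (by norm_num) hbig.le (by linarith)
          refine h1.trans (le_of_eq ?_)
          rw [one_div, ← Real.rpow_neg_one (2:ℝ), ← Real.rpow_mul (by norm_num)]
          norm_num
        calc ENNReal.ofReal (|x - y| ^ (-α)) ≤ ENNReal.ofReal ((2:ℝ) ^ α) :=
              ENNReal.ofReal_le_ofReal this
          _ ≤ _ := self_le_add_right _ _
  -- the inner integral is bounded uniformly
  set K : ℝ≥0∞ := ENNReal.ofReal ((2:ℝ) ^ α) * μ Set.univ +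
      ∑' n : ℕ, c n * ENNReal.ofReal ((2:ℝ) ^ (-(α * n) - ((f n : ℕ) : ℝ))) with hK
  have hx : ∀ x : ℝ, ∫⁻ y, (ENNReal.ofReal |x - y|) ^ (-α) ∂μ ≤ K := by
    intro x
    calc ∫⁻ y, (ENNReal.ofReal |x - y|) ^ (-α) ∂μ
        ≤ ∫⁻ y, (ENNReal.ofReal ((2:ℝ) ^ α) +
            ∑' n : ℕ, Set.indicator (Icc (x - r n) (x + r n)) (fun _ => c n) y) ∂μ :=
          lintegral_mono (key x)
      _ = ENNReal.ofReal ((2:ℝ) ^ α) * μ Set.univ +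
            ∑' n : ℕ, c n * μ (Icc (x - r n) (x + r n)) := by
          rw [lintegral_add_left measurable_const, lintegral_const,
            lintegral_tsum (fun n => (measurable_const.indicator measurableSet_Icc).aemeasurable)]
          congr 1
          exact tsum_congr fun n => lintegral_indicator_const measurableSet_Icc _
      _ ≤ K := by
          rw [hK]
          refine add_le_add_right (ENNReal.tsum_le_tsum fun n => ?_) _
          refine mul_le_mul_right ?_ _
          apply hμ n
          · linarith [hrpos n]
          · have : x + r n - (x - r n) = 2 * r n := by ring
            rw [this, hr]
            apply le_of_eq
            rw [show (2:ℝ) * (2:ℝ) ^ (-(n:ℝ) - 1) = (2:ℝ)^(1:ℝ) * (2:ℝ) ^ (-(n:ℝ) - 1) by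
              rw [Real.rpow_one], ← Real.rpow_add two_pos]
            ring_nf
  have hKlt : K < ⊤ := by
    rw [hK]
    apply ENNReal.add_lt_top.mpr
    constructor
    · exact ENNReal.mul_lt_top ENNReal.ofReal_lt_top hM
    · have heq : ∀ n : ℕ, c n * ENNReal.ofReal ((2:ℝ) ^ (-(α * n) - ((f n : ℕ) : ℝ)))
          = ENNReal.ofReal ((2:ℝ) ^ (2 * α)) * ENNReal.ofReal ((2:ℝ) ^ (-((f n : ℕ) : ℝ))) := by
        intro n
        rw [hc, ← ENNReal.ofReal_mul (by positivity), ← ENNReal.ofReal_mul (by positivity),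
          ← Real.rpow_add two_pos, ← Real.rpow_add two_pos]
        ring_nf
      calc (∑' n : ℕ, c n * ENNReal.ofReal ((2:ℝ) ^ (-(α * n) - ((f n : ℕ) : ℝ))))
          = ENNReal.ofReal ((2:ℝ) ^ (2 * α)) * ∑' n : ℕ, ENNReal.ofReal ((2:ℝ) ^ (-((f n : ℕ) : ℝ))) := by
            rw [← ENNReal.tsum_mul_left]; exact tsum_congr heq
        _ < ⊤ := by
            apply ENNReal.mul_lt_top ENNReal.ofReal_lt_top
            rw [← ENNReal.ofReal_tsum_of_nonneg (fun n => by positivity) hf]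
            exact ENNReal.ofReal_lt_top
  calc ∫⁻ x, ∫⁻ y, (ENNReal.ofReal |x - y|) ^ (-α) ∂μ ∂μ
      ≤ ∫⁻ _, K ∂μ := lintegral_mono hx
    _ = K * μ Set.univ := lintegral_const K
    _ < ⊤ := ENNReal.mul_lt_top hKlt hM
end

section
/- Let B be a standard one-dimensional Brownian motion started at 0. Let β > 1/2 and let μ be a finite Borel measure on [0,1] such that μ(I) ≤ c·|I|^β for every dyadic interval I and some fixed constant c > 0. Then there exists a constant c' > 0 (depending only on c and β) such that for every set A ⊆ [1/2, 1] which is a countable union of closed dyadic intervals, P(∃ t ∈ A, B(t) = 0) ≥ c' · μ(A)². -/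
open MeasureTheory ProbabilityTheory Set

/-- The closed dyadic interval `[k·2^(−n), (k+1)·2^(−n)]`. -/
def dyadicIcc (n k : ℕ) : Set ℝ := Icc ((k : ℝ) / 2 ^ n) (((k : ℝ) + 1) / 2 ^ n)

open Filter
open scoped ENNReal NNReal Topology



section MeasureLemmas

variable {β c : ℝ} {μ : Measure ℝ}

/-- total mass bound -/
lemma mu_univ_le (hsupp : μ (Icc (0 : ℝ) 1)ᶜ = 0)
    (hμ : ∀ n k : ℕ, k < 2 ^ n →
      μ (dyadicIcc n k) ≤ ENNReal.ofReal (c * (2 : ℝ) ^ (-β * (n : ℝ)))) :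
    μ univ ≤ ENNReal.ofReal c := by
  have h0 : μ (dyadicIcc 0 0) ≤ ENNReal.ofReal (c * (2 : ℝ) ^ (-β * (0:ℕ) : ℝ)) := hμ 0 0 (by norm_num)
  have : dyadicIcc 0 0 = Icc (0:ℝ) 1 := by
    simp [dyadicIcc]
  rw [this] at h0
  have : μ univ ≤ μ (Icc (0:ℝ) 1) + μ (Icc (0:ℝ) 1)ᶜ :=
    (measure_mono (by simp)).trans (measure_union_le _ _)
  rw [hsupp, add_zero] at this
  refine this.trans (h0.trans (le_of_eq ?_))
  norm_num

/-- dyadic bound for all k (also k ≥ 2^n) -/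
lemma dyadic_bound (hc : 0 < c) (hsupp : μ (Icc (0 : ℝ) 1)ᶜ = 0)
    (hμ : ∀ n k : ℕ, k < 2 ^ n →
      μ (dyadicIcc n k) ≤ ENNReal.ofReal (c * (2 : ℝ) ^ (-β * (n : ℝ)))) :
    ∀ n k : ℕ, μ (dyadicIcc n k) ≤ ENNReal.ofReal (c * (2 : ℝ) ^ (-β * (n : ℝ))) := by
  intro n k
  rcases lt_or_ge k (2 ^ n) with hk | hk
  · exact hμ n k hk
  · -- interval is to the right of 1
    have h2n : (0:ℝ) < 2 ^ n := by positivity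
    have hone : (1:ℝ) ≤ (k : ℝ) / 2 ^ n := by
      rw [le_div_iff₀ h2n]
      have : ((2:ℝ))^n ≤ (k:ℝ) := by exact_mod_cast hk
      simpa using this
    have hsub : dyadicIcc n k ∩ Icc (0:ℝ) 1 ⊆ {1} := by
      intro x ⟨hx1, hx2⟩
      have := hx1.1
      have h1x : (1:ℝ) ≤ x := le_trans hone this
      exact Set.mem_singleton_iff.mpr (le_antisymm hx2.2 h1x)
    have hmem1 : (1:ℝ) ∈ dyadicIcc n (2^n - 1) := by
      constructor
      · rw [div_le_one h2n]
        push_cast [Nat.cast_sub (Nat.one_le_two_pow)]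
        norm_num
      · rw [le_div_iff₀ h2n]
        push_cast [Nat.cast_sub (Nat.one_le_two_pow)]
        ring_nf
        norm_num
    calc μ (dyadicIcc n k) ≤ μ (dyadicIcc n k ∩ Icc (0:ℝ) 1) + μ (Icc (0:ℝ) 1)ᶜ :=
          (measure_mono (by intro x hx; by_cases h : x ∈ Icc (0:ℝ) 1 <;> simp [h, hx])).trans (measure_union_le _ _)
      _ ≤ μ {(1:ℝ)} + 0 := by rw [hsupp]; exact add_le_add_left (measure_mono hsub) 0
      _ ≤ μ (dyadicIcc n (2^n - 1)) := by rw [add_zero]; exact measure_mono (singleton_subset_iff.mpr hmem1)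
      _ ≤ _ := hμ n (2^n-1) (by have := Nat.one_le_two_pow (n := n); omega)

end MeasureLemmas

section MeasureLemmas
variable {β c : ℝ} {μ : Measure ℝ}

lemma ball_bound (hβ : 1/2 < β) (hc : 0 < c)
    (hsupp : μ (Icc (0 : ℝ) 1)ᶜ = 0)
    (hdy : ∀ n k : ℕ, μ (dyadicIcc n k) ≤ ENNReal.ofReal (c * (2 : ℝ) ^ (-β * (n : ℝ))))
    (huniv : μ univ ≤ ENNReal.ofReal c) :
    ∀ (t : ℝ) (n : ℕ), μ (Icc (t - ((2:ℝ)^n)⁻¹) (t + ((2:ℝ)^n)⁻¹))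
      ≤ ENNReal.ofReal (2 * (2:ℝ)^β * c * (2 : ℝ) ^ (-β * (n : ℝ))) := by
  have h2β : (1:ℝ) ≤ (2:ℝ)^β := Real.one_le_rpow (by norm_num) (by linarith)
  intro t n
  match n with
  | 0 =>
    refine (measure_mono (subset_univ _)).trans (huniv.trans (ENNReal.ofReal_le_ofReal ?_))
    have : (2:ℝ) ^ (-β * ((0:ℕ):ℝ)) = 1 := by norm_num
    rw [this]
    nlinarith
  | Nat.succ m =>
    set n := m + 1
    set r : ℝ := ((2:ℝ)^n)⁻¹ with hr
    have hrpos : (0:ℝ) < r := by positivity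
    set a' : ℝ := max (t - r) 0 with ha'
    have ha'0 : 0 ≤ a' := le_max_right _ _
    set k₀ : ℕ := ⌊a' * 2^m⌋₊ with hk₀
    have h2m : (0:ℝ) < 2^m := by positivity
    have hcov : Icc (t - r) (t + r) ∩ Icc (0:ℝ) 1 ⊆
        Icc ((k₀:ℝ)/2^m) (((k₀:ℝ)+2)/2^m) := by
      rintro x ⟨⟨hx1, hx2⟩, ⟨hx0, hx1'⟩⟩
      constructor
      · have h1 : (k₀:ℝ) ≤ a' * 2^m := Nat.floor_le (by positivity)
        have h2 : a' ≤ x := max_le hx1 hx0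
        rw [div_le_iff₀ h2m]
        nlinarith
      · have h3 : a' * 2^m < (k₀:ℝ) + 1 := Nat.lt_floor_add_one _
        have h4 : x ≤ a' + 2 * r := by
          rcases le_or_gt 0 (t - r) with h | h
          · rw [ha', max_eq_left h]; linarith
          · rw [ha', max_eq_right h.le]; linarith
        have h5 : 2 * r = (2^m : ℝ)⁻¹ := by
          rw [hr]
          have : ((2:ℝ)^n) = 2 * 2^m := by rw [pow_succ]; ring
          rw [this]
          field_simp
        rw [le_div_iff₀ h2m]
        rw [h5] at h4
        have : (2^m:ℝ)⁻¹ * 2^m = 1 := by field_simp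
        nlinarith
    have hunion : Icc ((k₀:ℝ)/2^m) (((k₀:ℝ)+2)/2^m) = dyadicIcc m k₀ ∪ dyadicIcc m (k₀+1) := by
      unfold dyadicIcc
      have e1 : ((k₀+1:ℕ):ℝ) = (k₀:ℝ)+1 := by push_cast; ring
      rw [e1, Icc_union_Icc_eq_Icc]
      · ring_nf
      · gcongr; linarith
      · gcongr; linarith
    calc μ (Icc (t - r) (t + r))
        ≤ μ (Icc (t - r) (t + r) ∩ Icc (0:ℝ) 1) + μ (Icc (0:ℝ) 1)ᶜ :=
          (measure_mono (by intro x hx; by_cases h : x ∈ Icc (0:ℝ) 1 <;> simp [h, hx])).trans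
            (measure_union_le _ _)
      _ ≤ μ (dyadicIcc m k₀ ∪ dyadicIcc m (k₀+1)) + 0 := by
          rw [hsupp]; exact add_le_add_left (measure_mono (hcov.trans hunion.subset)) 0
      _ ≤ μ (dyadicIcc m k₀) + μ (dyadicIcc m (k₀+1)) := by
          rw [add_zero]; exact measure_union_le _ _
      _ ≤ ENNReal.ofReal (c * (2 : ℝ) ^ (-β * (m : ℝ))) + ENNReal.ofReal (c * (2 : ℝ) ^ (-β * (m : ℝ))) :=
          add_le_add (hdy m k₀) (hdy m (k₀+1))
      _ ≤ ENNReal.ofReal (2 * (2:ℝ)^β * c * (2 : ℝ) ^ (-β * (n : ℝ))) := by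
          rw [← ENNReal.ofReal_add (by positivity) (by positivity)]
          apply ENNReal.ofReal_le_ofReal
          have : (2:ℝ) ^ (-β * (m:ℝ)) = (2:ℝ)^β * (2:ℝ)^(-β * (n:ℝ)) := by
            rw [← Real.rpow_add (by norm_num)]
            congr 1
            push_cast [n]
            ring
          rw [this]; ring_nf; rfl
end MeasureLemmas

lemma annuli_bound {t s : ℝ} (h : |t - s| ≤ 1) :
    (ENNReal.ofReal |t - s|) ^ (-(1/2) : ℝ) ≤
    ∑' n : ℕ, (Icc (t - ((2:ℝ)^n)⁻¹) (t + ((2:ℝ)^n)⁻¹)).indicator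
        (fun _ => ENNReal.ofReal (Real.sqrt 2 * Real.sqrt ((2:ℝ)^n))) s := by
  classical
  have hterm : ∀ n : ℕ, (1:ℝ) ≤ Real.sqrt 2 * Real.sqrt ((2:ℝ)^n) := by
    intro n
    have h1 : (1:ℝ) ≤ Real.sqrt 2 := by
      rw [show (1:ℝ) = Real.sqrt 1 by simp]
      exact Real.sqrt_le_sqrt (by norm_num)
    have h2 : (1:ℝ) ≤ Real.sqrt ((2:ℝ)^n) := by
      rw [show (1:ℝ) = Real.sqrt 1 by simp]
      exact Real.sqrt_le_sqrt (one_le_pow₀ (by norm_num))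
    nlinarith [Real.sqrt_nonneg (2:ℝ), Real.sqrt_nonneg ((2:ℝ)^n)]
  by_cases hst : t = s
  · -- LHS = ⊤, and RHS = ⊤ since every indicator is active with value ≥ 1
    have hmem : ∀ n : ℕ, s ∈ Icc (t - ((2:ℝ)^n)⁻¹) (t + ((2:ℝ)^n)⁻¹) := by
      intro n
      have : (0:ℝ) < ((2:ℝ)^n)⁻¹ := by positivity
      have h1 := hst.le; have h2 := hst.ge
      constructor
      · linarith
      · linarith
    have hRHS : (⊤ : ℝ≥0∞) ≤ ∑' n : ℕ, (Icc (t - ((2:ℝ)^n)⁻¹) (t + ((2:ℝ)^n)⁻¹)).indicator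
        (fun _ => ENNReal.ofReal (Real.sqrt 2 * Real.sqrt ((2:ℝ)^n))) s := by
      rw [← ENNReal.tsum_const_eq_top_of_ne_zero (α := ℕ) (c := (1:ℝ≥0∞)) one_ne_zero]
      refine Summable.tsum_le_tsum (fun n => ?_) ENNReal.summable ENNReal.summable
      rw [indicator_of_mem (hmem n)]
      calc (1:ℝ≥0∞) = ENNReal.ofReal 1 := by simp
        _ ≤ _ := ENNReal.ofReal_le_ofReal (hterm n)
    exact le_trans le_top hRHS
  · have hd : 0 < |t - s| := abs_pos.mpr (sub_ne_zero.mpr hst)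
    set d := |t - s| with hdd
    have hex : ∃ n : ℕ, ((2:ℝ)^(n+1))⁻¹ < d := by
      obtain ⟨n, hn⟩ := exists_pow_lt_of_lt_one hd (by norm_num : (1/2:ℝ) < 1)
      refine ⟨n, lt_of_le_of_lt ?_ hn⟩
      have e : ((1:ℝ)/2)^n = ((2:ℝ)^n)⁻¹ := by rw [one_div, inv_pow]
      rw [e]
      apply inv_anti₀ (by positivity)
      apply pow_le_pow_right₀ (by norm_num) (by omega)
    set n₀ := Nat.find hex with hn₀
    have hlt : ((2:ℝ)^(n₀+1))⁻¹ < d := Nat.find_spec hex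
    have hle : d ≤ ((2:ℝ)^n₀)⁻¹ := by
      match hn : n₀ with
      | 0 => simpa using h
      | j+1 =>
        have := Nat.find_min hex (by omega : j < n₀)
        push_neg at this
        simpa using this
    have hmem : s ∈ Icc (t - ((2:ℝ)^n₀)⁻¹) (t + ((2:ℝ)^n₀)⁻¹) := by
      rw [abs_sub_le_iff] at hle
      constructor <;> linarith [hle.1, hle.2]
    refine le_trans ?_ (ENNReal.le_tsum n₀)
    rw [indicator_of_mem hmem]
    rw [ENNReal.ofReal_rpow_of_pos hd]
    apply ENNReal.ofReal_le_ofReal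
    have hsq : Real.sqrt 2 * Real.sqrt ((2:ℝ)^n₀) = Real.sqrt ((2:ℝ)^(n₀+1)) := by
      rw [pow_succ, mul_comm ((2:ℝ)^n₀) 2, Real.sqrt_mul (by norm_num)]
    rw [hsq]
    rw [Real.rpow_neg hd.le, ← Real.sqrt_eq_rpow]
    rw [inv_le_iff_one_le_mul₀ (Real.sqrt_pos.mpr hd)]
    have h1 : Real.sqrt ((2:ℝ)^(n₀+1))⁻¹ < Real.sqrt d := by
      exact Real.sqrt_lt_sqrt (by positivity) hlt
    have h2 : Real.sqrt ((2:ℝ)^(n₀+1))⁻¹ = (Real.sqrt ((2:ℝ)^(n₀+1)))⁻¹ := by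
      rw [Real.sqrt_inv]
    have hpos : (0:ℝ) < Real.sqrt ((2:ℝ)^(n₀+1)) := Real.sqrt_pos.mpr (by positivity)
    rw [h2] at h1
    have h4 := mul_lt_mul_of_pos_left h1 hpos
    rw [mul_inv_cancel₀ (ne_of_gt hpos)] at h4
    linarith

section Energy
variable {β c : ℝ} {μ : Measure ℝ}

/-- The geometric-series constant controlling the 1/2-energy of `μ`. -/
noncomputable def energyConst (β c : ℝ) : ℝ≥0∞ :=
  ENNReal.ofReal (Real.sqrt 2 * (2 * (2:ℝ)^β * c)) * (1 - ENNReal.ofReal ((2:ℝ)^((1:ℝ)/2 - β)))⁻¹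

lemma energyConst_lt_top (hβ : 1/2 < β) : energyConst β c < ⊤ := by
  apply ENNReal.mul_lt_top ENNReal.ofReal_lt_top
  rw [ENNReal.inv_lt_top, tsub_pos_iff_lt]
  apply ENNReal.ofReal_lt_one.mpr
  rw [show (1:ℝ) = (2:ℝ) ^ (0:ℝ) by simp]
  apply Real.rpow_lt_rpow_of_exponent_lt (by norm_num)
  linarith

lemma energy_bound_aux (hβ : 1/2 < β) (hc : 0 < c)
    (hball : ∀ (t : ℝ) (n : ℕ), μ (Icc (t - ((2:ℝ)^n)⁻¹) (t + ((2:ℝ)^n)⁻¹))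
      ≤ ENNReal.ofReal (2 * (2:ℝ)^β * c * (2 : ℝ) ^ (-β * (n : ℝ)))) :
    ∀ t ∈ Icc (0:ℝ) 1,
      ∫⁻ s in Icc (0:ℝ) 1, (ENNReal.ofReal |t - s|) ^ (-(1/2) : ℝ) ∂μ ≤ energyConst β c := by
  intro t ht
  set G : ℝ → ℝ≥0∞ := fun s => ∑' n : ℕ, (Icc (t - ((2:ℝ)^n)⁻¹) (t + ((2:ℝ)^n)⁻¹)).indicator
      (fun _ => ENNReal.ofReal (Real.sqrt 2 * Real.sqrt ((2:ℝ)^n))) s with hG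
  have hGmeas : Measurable G := by
    apply Measurable.ennreal_tsum
    intro n
    exact measurable_const.indicator measurableSet_Icc
  have step1 : ∫⁻ s in Icc (0:ℝ) 1, (ENNReal.ofReal |t - s|) ^ (-(1/2) : ℝ) ∂μ
      ≤ ∫⁻ s in Icc (0:ℝ) 1, G s ∂μ := by
    apply setLIntegral_mono hGmeas
    intro s hs
    apply annuli_bound
    rw [abs_sub_le_iff]
    constructor <;> [linarith [ht.1, ht.2, hs.1, hs.2]; linarith [ht.1, ht.2, hs.1, hs.2]]
  have step2 : ∫⁻ s in Icc (0:ℝ) 1, G s ∂μ ≤ ∫⁻ s, G s ∂μ := setLIntegral_le_lintegral _ _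
  have step3 : ∫⁻ s, G s ∂μ = ∑' n : ℕ, ∫⁻ s, (Icc (t - ((2:ℝ)^n)⁻¹) (t + ((2:ℝ)^n)⁻¹)).indicator
      (fun _ => ENNReal.ofReal (Real.sqrt 2 * Real.sqrt ((2:ℝ)^n))) s ∂μ := by
    rw [hG]
    exact lintegral_tsum (fun n => (measurable_const.indicator measurableSet_Icc).aemeasurable)
  have step4 : ∀ n : ℕ, ∫⁻ s, (Icc (t - ((2:ℝ)^n)⁻¹) (t + ((2:ℝ)^n)⁻¹)).indicator
      (fun _ => ENNReal.ofReal (Real.sqrt 2 * Real.sqrt ((2:ℝ)^n))) s ∂μ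
      ≤ ENNReal.ofReal (Real.sqrt 2 * (2 * (2:ℝ)^β * c))
          * (ENNReal.ofReal ((2:ℝ)^((1:ℝ)/2 - β)))^n := by
    intro n
    rw [lintegral_indicator measurableSet_Icc, setLIntegral_const]
    calc ENNReal.ofReal (Real.sqrt 2 * Real.sqrt ((2:ℝ)^n)) * μ (Icc (t - ((2:ℝ)^n)⁻¹) (t + ((2:ℝ)^n)⁻¹))
        ≤ ENNReal.ofReal (Real.sqrt 2 * Real.sqrt ((2:ℝ)^n))
            * ENNReal.ofReal (2 * (2:ℝ)^β * c * (2 : ℝ) ^ (-β * (n : ℝ))) := by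
          exact mul_le_mul_right (hball t n) _
      _ = ENNReal.ofReal (Real.sqrt 2 * (2 * (2:ℝ)^β * c) * (Real.sqrt ((2:ℝ)^n) * (2:ℝ)^(-β * (n:ℝ)))) := by
          rw [← ENNReal.ofReal_mul (by positivity)]
          ring_nf
      _ = ENNReal.ofReal (Real.sqrt 2 * (2 * (2:ℝ)^β * c)) * (ENNReal.ofReal ((2:ℝ)^((1:ℝ)/2 - β)))^n := by
          rw [ENNReal.ofReal_mul (by positivity), ← ENNReal.ofReal_pow (by positivity)]
          congr 1
          rw [← Real.rpow_natCast ((2:ℝ)^((1:ℝ)/2 - β)) n, ← Real.rpow_mul (by norm_num)]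
          have hs : Real.sqrt ((2:ℝ)^n) = (2:ℝ)^((n:ℝ)/2) := by
            rw [← Real.rpow_natCast 2 n, Real.sqrt_eq_rpow, ← Real.rpow_mul (by norm_num)]
            ring_nf
          rw [hs, ← Real.rpow_add (by norm_num)]
          congr 1
          ring
  calc ∫⁻ s in Icc (0:ℝ) 1, (ENNReal.ofReal |t - s|) ^ (-(1/2) : ℝ) ∂μ
      ≤ ∑' n : ℕ, ∫⁻ s, (Icc (t - ((2:ℝ)^n)⁻¹) (t + ((2:ℝ)^n)⁻¹)).indicator
          (fun _ => ENNReal.ofReal (Real.sqrt 2 * Real.sqrt ((2:ℝ)^n))) s ∂μ := by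
        rw [← step3]; exact step1.trans step2
    _ ≤ ∑' n : ℕ, ENNReal.ofReal (Real.sqrt 2 * (2 * (2:ℝ)^β * c))
          * (ENNReal.ofReal ((2:ℝ)^((1:ℝ)/2 - β)))^n :=
        Summable.tsum_le_tsum step4 ENNReal.summable ENNReal.summable
    _ = energyConst β c := by
        rw [ENNReal.tsum_mul_left, energyConst, ENNReal.tsum_geometric]
end Energy


section Adapter
variable {β c : ℝ} {μ : Measure ℝ}
lemma energy_bound (hβ : 1/2 < β) (hc : 0 < c)
    (hsupp : μ (Icc (0 : ℝ) 1)ᶜ = 0)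
    (hμ : ∀ n k : ℕ, k < 2 ^ n →
      μ (dyadicIcc n k) ≤ ENNReal.ofReal (c * (2 : ℝ) ^ (-β * (n : ℝ)))) :
    ∀ t ∈ Icc (0:ℝ) 1,
      ∫⁻ s in Icc (0:ℝ) 1, (ENNReal.ofReal |t - s|) ^ (-(1/2) : ℝ) ∂μ ≤ energyConst β c :=
  energy_bound_aux hβ hc
    (ball_bound hβ hc hsupp (dyadic_bound hc hsupp hμ) (mu_univ_le hsupp hμ))
end Adapter


lemma gauss_upper (v : ℝ≥0) (hv : v ≠ 0) {r : ℝ} (hr : 0 ≤ r) :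
    gaussianReal 0 v (Icc (-r) r) ≤ ENNReal.ofReal (2*r) * (ENNReal.ofReal (v:ℝ))^(-(1/2):ℝ) := by
  have hv0 : (0:ℝ) < (v:ℝ) := by
    rcases eq_or_lt_of_le (v.coe_nonneg) with h | h
    · exact absurd (by exact_mod_cast h.symm) hv
    · exact h
  rw [gaussianReal_apply 0 hv]
  have hpdf : ∀ x : ℝ, gaussianPDF 0 v x ≤ ENNReal.ofReal ((Real.sqrt (v:ℝ))⁻¹) := by
    intro x
    rw [gaussianPDF]
    apply ENNReal.ofReal_le_ofReal
    rw [gaussianPDFReal]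
    have h1 : Real.exp (-(x - 0)^2/(2*(v:ℝ))) ≤ 1 := by
      rw [Real.exp_le_one_iff]
      apply div_nonpos_of_nonpos_of_nonneg
      · simp [sq_nonneg]
      · positivity
    have h2 : (Real.sqrt (2 * Real.pi * (v:ℝ)))⁻¹ ≤ (Real.sqrt (v:ℝ))⁻¹ := by
      apply inv_anti₀ (Real.sqrt_pos.mpr hv0)
      apply Real.sqrt_le_sqrt
      nlinarith [Real.pi_gt_three]
    have h3 : (0:ℝ) ≤ (Real.sqrt (2 * Real.pi * (v:ℝ)))⁻¹ := by positivity
    calc (Real.sqrt (2 * Real.pi * (v:ℝ)))⁻¹ * Real.exp (-(x - 0)^2/(2*(v:ℝ)))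
        ≤ (Real.sqrt (v:ℝ))⁻¹ * 1 := mul_le_mul h2 h1 (Real.exp_nonneg _) (by positivity)
      _ = (Real.sqrt (v:ℝ))⁻¹ := mul_one _
  calc ∫⁻ x in Icc (-r) r, gaussianPDF 0 v x
      ≤ ∫⁻ _x in Icc (-r) r, ENNReal.ofReal ((Real.sqrt (v:ℝ))⁻¹) :=
        setLIntegral_mono measurable_const (fun x _ => hpdf x)
    _ = ENNReal.ofReal ((Real.sqrt (v:ℝ))⁻¹) * volume (Icc (-r) r) := setLIntegral_const _ _
    _ = ENNReal.ofReal (2*r) * (ENNReal.ofReal (v:ℝ))^(-(1/2):ℝ) := by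
        rw [Real.volume_Icc, ENNReal.ofReal_rpow_of_pos hv0]
        rw [show r - -r = 2*r by ring, mul_comm]
        congr 1
        rw [Real.rpow_neg hv0.le, Real.sqrt_eq_rpow]

lemma gauss_lower (v : ℝ≥0) (h1 : 1/2 ≤ (v:ℝ)) (h2 : (v:ℝ) ≤ 1) {ε : ℝ} (hε : 0 < ε) (hε1 : ε ≤ 1) :
    ENNReal.ofReal (2 * ε * (Real.exp (-1) / Real.sqrt (2 * Real.pi)))
      ≤ gaussianReal 0 v (Icc (-ε) ε) := by
  have hv : v ≠ 0 := by
    intro h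
    rw [h] at h1; norm_num at h1
  have hv0 : (0:ℝ) < (v:ℝ) := by linarith
  rw [gaussianReal_apply 0 hv]
  have hpdf : ∀ x ∈ Icc (-ε) ε,
      ENNReal.ofReal (Real.exp (-1) / Real.sqrt (2 * Real.pi)) ≤ gaussianPDF 0 v x := by
    intro x hx
    rw [gaussianPDF]
    apply ENNReal.ofReal_le_ofReal
    rw [gaussianPDFReal]
    have hx2 : (x - 0)^2 ≤ 1 := by
      have : |x| ≤ 1 := by
        rw [abs_le]; constructor <;> [linarith [hx.1]; linarith [hx.2]]
      calc (x-0)^2 = |x|^2 := by rw [sub_zero, sq_abs]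
        _ ≤ 1 := by nlinarith [abs_nonneg x]
    have he : Real.exp (-1) ≤ Real.exp (-(x - 0)^2/(2*(v:ℝ))) := by
      apply Real.exp_le_exp.mpr
      rw [neg_div, neg_le_neg_iff]
      rw [div_le_one (by linarith)]
      linarith
    have hs : (Real.sqrt (2 * Real.pi))⁻¹ ≤ (Real.sqrt (2 * Real.pi * (v:ℝ)))⁻¹ := by
      apply inv_anti₀ (Real.sqrt_pos.mpr (by positivity))
      apply Real.sqrt_le_sqrt
      nlinarith [Real.pi_gt_three]
    calc Real.exp (-1) / Real.sqrt (2 * Real.pi)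
        = (Real.sqrt (2 * Real.pi))⁻¹ * Real.exp (-1) := by ring
      _ ≤ (Real.sqrt (2 * Real.pi * (v:ℝ)))⁻¹ * Real.exp (-(x - 0)^2/(2*(v:ℝ))) :=
          mul_le_mul hs he (Real.exp_nonneg _) (by positivity)
  calc ENNReal.ofReal (2 * ε * (Real.exp (-1) / Real.sqrt (2 * Real.pi)))
      = ENNReal.ofReal (Real.exp (-1) / Real.sqrt (2 * Real.pi)) * volume (Icc (-ε) ε) := by
        rw [Real.volume_Icc, show ε - -ε = 2*ε by ring, ← ENNReal.ofReal_mul (by positivity)]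
        rw [mul_comm]
    _ = ∫⁻ _x in Icc (-ε) ε, ENNReal.ofReal (Real.exp (-1) / Real.sqrt (2 * Real.pi)) :=
        (setLIntegral_const _ _).symm
    _ ≤ ∫⁻ x in Icc (-ε) ε, gaussianPDF 0 v x :=
        setLIntegral_mono (measurable_gaussianPDF _ _) hpdf




section BM
variable {Ω : Type} [MeasurableSpace Ω] {P : Measure Ω} {B : ℝ → Ω → ℝ}

lemma law_Bt (hB : IsStdBM P B) {t : ℝ} (ht : 0 < t) :
    P.map (B t) = gaussianReal 0 t.toNNReal := by
  have h := hB.gaussIncr 0 t le_rfl ht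
  rw [zero_add] at h
  rw [← h]
  apply Measure.map_congr
  filter_upwards [hB.start] with ω h0
  rw [h0, sub_zero]

lemma prob_abs_le (hB : IsStdBM P B) {t ε : ℝ} (ht : 0 < t) :
    P {ω | |B t ω| ≤ ε} = gaussianReal 0 t.toNNReal (Icc (-ε) ε) := by
  have hset : {ω | |B t ω| ≤ ε} = B t ⁻¹' (Icc (-ε) ε) := by
    ext ω; simp [abs_le]
  rw [hset, ← law_Bt hB ht, Measure.map_apply (hB.meas t) measurableSet_Icc]

lemma pair_bound (hB : IsStdBM P B) {s t ε : ℝ} (hs : 1/2 ≤ s) (hst : s < t)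
    (hε : 0 < ε) :
    P ({ω | |B s ω| ≤ ε} ∩ {ω | |B t ω| ≤ ε})
      ≤ ENNReal.ofReal (16 * ε^2) * (ENNReal.ofReal (t - s))^(-(1/2):ℝ) := by
  have hs0 : (0:ℝ) < s := by linarith
  have hts : (0:ℝ) < t - s := by linarith
  set f : Ω → ℝ := fun ω => B s ω - B 0 ω with hf
  set g : Ω → ℝ := fun ω => B t ω - B s ω with hg
  -- independence
  set tv : Fin 3 → ℝ := ![0, s, t] with htv
  have hmono : Monotone tv := by
    intro i j hij
    fin_cases i <;> fin_cases j <;> simp_all [tv] <;> first | rfl | linarith | omega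
  have hnn : ∀ i, 0 ≤ tv i := by
    intro i; fin_cases i <;> simp [tv] <;> linarith
  have hindep := hB.indepIncr 2 tv hmono hnn
  have h01 : IndepFun f g P := by
    have h := hindep.indepFun (i := 0) (j := 1) (by decide)
    have e0 : (fun ω => B (tv (0:Fin 2).succ) ω - B (tv (0:Fin 2).castSucc) ω) = f := by
      funext ω; simp [tv, f, show ((0:Fin 2).succ : Fin 3) = 1 from rfl,
        show ((0:Fin 2).castSucc : Fin 3) = 0 from rfl]
    have e1 : (fun ω => B (tv (1:Fin 2).succ) ω - B (tv (1:Fin 2).castSucc) ω) = g := by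
      funext ω; simp [tv, g, show ((1:Fin 2).succ : Fin 3) = 2 from rfl,
        show ((1:Fin 2).castSucc : Fin 3) = 1 from rfl]
    rwa [e0, e1] at h
  -- a.e. inclusion of events
  have hincl : P ({ω | |B s ω| ≤ ε} ∩ {ω | |B t ω| ≤ ε})
      ≤ P (f ⁻¹' (Icc (-ε) ε) ∩ g ⁻¹' (Icc (-(2*ε)) (2*ε))) := by
    apply measure_mono_ae
    filter_upwards [hB.start] with ω h0
    intro hmem
    obtain ⟨h1, h2⟩ := hmem
    simp only [mem_setOf_eq] at h1 h2
    constructor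
    · simp only [mem_preimage, mem_Icc, f, h0, sub_zero]
      rw [← abs_le]; exact h1
    · simp only [mem_preimage, mem_Icc, g]
      rw [← abs_le]
      calc |B t ω - B s ω| ≤ |B t ω| + |B s ω| := abs_sub _ _
        _ ≤ 2*ε := by linarith
  -- product by independence
  have hprod : P (f ⁻¹' (Icc (-ε) ε) ∩ g ⁻¹' (Icc (-(2*ε)) (2*ε)))
      = P (f ⁻¹' (Icc (-ε) ε)) * P (g ⁻¹' (Icc (-(2*ε)) (2*ε))) :=
    h01.measure_inter_preimage_eq_mul _ _ measurableSet_Icc measurableSet_Icc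
  -- laws
  have hlawf : P.map f = gaussianReal 0 s.toNNReal := by
    have h := hB.gaussIncr 0 s le_rfl hs0
    rwa [zero_add] at h
  have hlawg : P.map g = gaussianReal 0 (t-s).toNNReal := by
    have h := hB.gaussIncr s (t-s) hs0.le hts
    rwa [show s + (t-s) = t from by ring] at h
  have hfmeas : Measurable f := (hB.meas s).sub (hB.meas 0)
  have hgmeas : Measurable g := (hB.meas t).sub (hB.meas s)
  have hPf : P (f ⁻¹' (Icc (-ε) ε)) = gaussianReal 0 s.toNNReal (Icc (-ε) ε) := by
    rw [← hlawf, Measure.map_apply hfmeas measurableSet_Icc]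
  have hPg : P (g ⁻¹' (Icc (-(2*ε)) (2*ε))) = gaussianReal 0 (t-s).toNNReal (Icc (-(2*ε)) (2*ε)) := by
    rw [← hlawg, Measure.map_apply hgmeas measurableSet_Icc]
  -- gaussian bounds
  have hsv : s.toNNReal ≠ 0 := by
    simp [Real.toNNReal_eq_zero]; linarith
  have htsv : (t-s).toNNReal ≠ 0 := by
    simp [Real.toNNReal_eq_zero]; linarith
  have hb1 : gaussianReal 0 s.toNNReal (Icc (-ε) ε) ≤ ENNReal.ofReal (2*Real.sqrt 2*ε) := by
    refine (gauss_upper s.toNNReal hsv hε.le).trans ?_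
    rw [Real.coe_toNNReal s hs0.le]
    have hr : (ENNReal.ofReal s)^(-(1/2):ℝ) ≤ ENNReal.ofReal (Real.sqrt 2) := by
      rw [ENNReal.ofReal_rpow_of_pos hs0]
      apply ENNReal.ofReal_le_ofReal
      rw [Real.rpow_neg hs0.le, ← Real.sqrt_eq_rpow]
      have h1 : Real.sqrt 2⁻¹ ≤ Real.sqrt s := Real.sqrt_le_sqrt (by linarith)
      have h2 : (Real.sqrt s)⁻¹ ≤ (Real.sqrt 2⁻¹)⁻¹ :=
        inv_anti₀ (Real.sqrt_pos.mpr (by norm_num)) h1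
      rwa [Real.sqrt_inv, inv_inv] at h2
    calc ENNReal.ofReal (2*ε) * (ENNReal.ofReal s)^(-(1/2):ℝ)
        ≤ ENNReal.ofReal (2*ε) * ENNReal.ofReal (Real.sqrt 2) := mul_le_mul_right hr _
      _ = ENNReal.ofReal (2*Real.sqrt 2*ε) := by
          rw [← ENNReal.ofReal_mul (by positivity)]; ring_nf
  have hb2 : gaussianReal 0 (t-s).toNNReal (Icc (-(2*ε)) (2*ε))
      ≤ ENNReal.ofReal (4*ε) * (ENNReal.ofReal (t-s))^(-(1/2):ℝ) := by
    refine (gauss_upper (t-s).toNNReal htsv (by positivity)).trans ?_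
    rw [Real.coe_toNNReal (t-s) hts.le]
    apply mul_le_mul_left
    apply ENNReal.ofReal_le_ofReal; ring_nf; rfl
  calc P ({ω | |B s ω| ≤ ε} ∩ {ω | |B t ω| ≤ ε})
      ≤ P (f ⁻¹' (Icc (-ε) ε)) * P (g ⁻¹' (Icc (-(2*ε)) (2*ε))) := by rw [← hprod]; exact hincl
    _ ≤ ENNReal.ofReal (2*Real.sqrt 2*ε) * (ENNReal.ofReal (4*ε) * (ENNReal.ofReal (t-s))^(-(1/2):ℝ)) := by
        rw [hPf, hPg]; exact mul_le_mul' hb1 hb2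
    _ ≤ ENNReal.ofReal (16 * ε^2) * (ENNReal.ofReal (t - s))^(-(1/2):ℝ) := by
        rw [← mul_assoc, ← ENNReal.ofReal_mul (by positivity)]
        apply mul_le_mul_left
        apply ENNReal.ofReal_le_ofReal
        have h2 : Real.sqrt 2 ≤ 2 := by
          nlinarith [Real.sq_sqrt (show (0:ℝ) ≤ 2 by norm_num), Real.sqrt_nonneg 2]
        nlinarith [Real.sqrt_nonneg 2, sq_nonneg ε]
end BM


noncomputable def dApprox (n : ℕ) (t : ℝ) : ℝ := (⌈t * 2^n⌉ : ℤ) / 2^n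

lemma dApprox_le (n : ℕ) (t : ℝ) : t ≤ dApprox n t := by
  rw [dApprox, le_div_iff₀ (by positivity)]
  exact Int.le_ceil _

lemma dApprox_lt (n : ℕ) (t : ℝ) : dApprox n t < t + ((2:ℝ)^n)⁻¹ := by
  rw [dApprox, div_lt_iff₀ (by positivity)]
  calc ((⌈t * 2^n⌉ : ℤ) : ℝ) < t * 2^n + 1 := Int.ceil_lt_add_one _
    _ = (t + ((2:ℝ)^n)⁻¹) * 2^n := by field_simp

lemma dApprox_tendsto (t : ℝ) : Tendsto (fun n => dApprox n t) atTop (𝓝 t) := by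
  apply tendsto_of_tendsto_of_tendsto_of_le_of_le (g := fun _ => t)
      (h := fun n => t + ((2:ℝ)^n)⁻¹) tendsto_const_nhds
  · have h : Tendsto (fun n : ℕ => ((2:ℝ)⁻¹)^n) atTop (𝓝 0) :=
      tendsto_pow_atTop_nhds_zero_of_lt_one (by norm_num) (by norm_num)
    have h2 : Tendsto (fun n : ℕ => t + ((2:ℝ)^n)⁻¹) atTop (𝓝 (t + 0)) := by
      apply Tendsto.const_add
      simpa [inv_pow] using h
    simpa using h2
  · exact fun n => dApprox_le n t
  · exact fun n => (dApprox_lt n t).le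

section J
variable {Ω : Type} [MeasurableSpace Ω]

noncomputable def Jf (B : ℝ → Ω → ℝ) : ℝ × Ω → ℝ≥0∞ := fun p =>
  Filter.liminf (fun n => ENNReal.ofReal |B (dApprox n p.1) p.2|) Filter.atTop

lemma Jf_measurable {B : ℝ → Ω → ℝ} (hmeas : ∀ t, Measurable (B t)) :
    Measurable (Jf B) := by
  apply Measurable.liminf
  intro n
  have h1 : Measurable (fun q : Ω × ℤ => B ((q.2 : ℝ)/2^n) q.1) :=
    measurable_from_prod_countable_left (fun k => by simpa using hmeas ((k:ℝ)/2^n))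
  have h2 : Measurable (fun p : ℝ × Ω => (p.2, (⌈p.1 * 2^n⌉ : ℤ))) :=
    measurable_snd.prodMk (Int.measurable_ceil.comp (measurable_fst.mul measurable_const))
  have h3 : Measurable (fun p : ℝ × Ω => B (dApprox n p.1) p.2) := h1.comp h2
  exact h3.abs.ennreal_ofReal

lemma Jf_eq {B : ℝ → Ω → ℝ} {ω : Ω} (hcont : ContinuousOn (fun t => B t ω) (Ici 0))
    {t : ℝ} (ht : 0 ≤ t) : Jf B (t, ω) = ENNReal.ofReal |B t ω| := by
  have hd : Tendsto (fun n => dApprox n t) atTop (𝓝[Ici 0] t) := by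
    apply tendsto_nhdsWithin_of_tendsto_nhds_of_eventually_within _ (dApprox_tendsto t)
    exact Eventually.of_forall (fun n => le_trans ht (dApprox_le n t))
  have hBt : Tendsto (fun n => B (dApprox n t) ω) atTop (𝓝 (B t ω)) :=
    ((hcont t ht).tendsto).comp hd
  have hJ : Tendsto (fun n => ENNReal.ofReal |B (dApprox n t) ω|) atTop
      (𝓝 (ENNReal.ofReal |B t ω|)) :=
    (ENNReal.continuous_ofReal.tendsto _).comp (continuous_abs.continuousAt.tendsto.comp hBt)
  exact hJ.liminf_eq
end J


lemma paley_zygmund {Ω : Type} [MeasurableSpace Ω] (P : Measure Ω) (Z : Ω → ℝ≥0∞)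
    (hZ : Measurable Z) :
    (∫⁻ ω, Z ω ∂P)^2 ≤ (∫⁻ ω, (Z ω)^2 ∂P) * P {ω | 0 < Z ω} := by
  set S := {ω | 0 < Z ω} with hS
  have hSmeas : MeasurableSet S := measurableSet_lt measurable_const hZ
  set g : Ω → ℝ≥0∞ := S.indicator (fun _ => 1) with hg
  have hZg : ∀ ω, Z ω = (Z * g) ω := by
    intro ω
    by_cases h : ω ∈ S
    · simp [hg, indicator_of_mem h]
    · have h0 : Z ω = 0 := by
        by_contra hne
        exact h (pos_iff_ne_zero.mpr hne)
      simp [h0]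
  have hpq : Real.HolderConjugate 2 2 := Real.holderConjugate_iff.mpr ⟨by norm_num, by norm_num⟩
  have hCS := ENNReal.lintegral_mul_le_Lp_mul_Lq P hpq (f := Z) (g := g) hZ.aemeasurable
    (((measurable_const (a := (1:ℝ≥0∞))).indicator hSmeas).aemeasurable)
  have hg2 : ∀ ω, g ω ^ (2:ℝ) = g ω := by
    intro ω
    by_cases h : ω ∈ S
    · simp [hg, indicator_of_mem h]
    · simp [hg, indicator_of_notMem h, ENNReal.zero_rpow_of_pos]
  have hint_g : (∫⁻ ω, g ω ^ (2:ℝ) ∂P) = P S := by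
    simp_rw [hg2]
    rw [hg, lintegral_indicator hSmeas]
    simp
  have key : ∫⁻ ω, Z ω ∂P ≤ (∫⁻ ω, Z ω ^ (2:ℝ) ∂P) ^ (1/(2:ℝ)) * (P S) ^ (1/(2:ℝ)) := by
    calc ∫⁻ ω, Z ω ∂P = ∫⁻ ω, (Z * g) ω ∂P := by
          congr 1; funext ω; exact hZg ω
      _ ≤ (∫⁻ ω, Z ω ^ (2:ℝ) ∂P) ^ (1/(2:ℝ)) * (∫⁻ ω, g ω ^ (2:ℝ) ∂P) ^ (1/(2:ℝ)) := hCS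
      _ = _ := by rw [hint_g]
  have hsq : ∀ x : ℝ≥0∞, (x ^ (1/(2:ℝ)))^2 = x := by
    intro x
    rw [← ENNReal.rpow_natCast (x ^ (1/(2:ℝ))) 2, ← ENNReal.rpow_mul]
    norm_num
  calc (∫⁻ ω, Z ω ∂P)^2 ≤ ((∫⁻ ω, Z ω ^ (2:ℝ) ∂P) ^ (1/(2:ℝ)) * (P S) ^ (1/(2:ℝ)))^2 := by
        apply pow_le_pow_left' key
    _ = (∫⁻ ω, Z ω ^ (2:ℝ) ∂P) * P S := by
        rw [mul_pow, hsq, hsq]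
    _ = (∫⁻ ω, (Z ω)^2 ∂P) * P S := by
        congr 1
        apply lintegral_congr
        intro ω
        rw [← ENNReal.rpow_natCast (Z ω) 2]
        norm_num




noncomputable def hitConst (β c : ℝ) : ℝ≥0∞ :=
  ENNReal.ofReal (4 * (Real.exp (-1) / Real.sqrt (2*Real.pi))^2)
    * (ENNReal.ofReal 16 * energyConst β c * ENNReal.ofReal c)⁻¹


theorem key {Ω : Type} [MeasurableSpace Ω] (P : Measure Ω) (B : ℝ → Ω → ℝ)
    (hB : IsStdBM P B) (β c : ℝ) (hβ : 1 / 2 < β) (hc : 0 < c)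
    (μ : Measure ℝ) [IsFiniteMeasure μ] (hsupp : μ (Icc (0 : ℝ) 1)ᶜ = 0)
    (hμ : ∀ n k : ℕ, k < 2 ^ n →
      μ (dyadicIcc n k) ≤ ENNReal.ofReal (c * (2 : ℝ) ^ (-β * (n : ℝ)))) :
    ∀ A : Set ℝ, A ⊆ Icc (1 / 2 : ℝ) 1 →
      (∃ F : Finset (ℕ × ℕ), A = ⋃ p ∈ F, dyadicIcc p.1 p.2) →
      hitConst β c * μ A ^ 2 ≤ P {ω | ∃ t ∈ A, B t ω = 0} := by
  intro A hA hF
  obtain ⟨F, hAF⟩ := hF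
  haveI := hB.isProb
  by_cases hμA : μ A = 0
  · simp [hμA]
  have hAmeas : MeasurableSet A := by
    rw [hAF]; exact MeasurableSet.biUnion F.countable_toSet (fun p _ => measurableSet_Icc)
  have hAcomp : IsCompact A := by
    rw [hAF]; exact F.finite_toSet.isCompact_biUnion (fun p _ => isCompact_Icc)
  have hA01 : A ⊆ Icc (0:ℝ) 1 := hA.trans (Icc_subset_Icc (by norm_num) le_rfl)
  have hA0 : ∀ t ∈ A, (0:ℝ) ≤ t := fun t ht => (hA01 ht).1
  -- the null set N outside which paths are continuous
  set N : Set Ω := toMeasurable P {ω | ¬ ContinuousOn (fun t => B t ω) (Ici 0)} with hN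
  have hNmeas : MeasurableSet N := measurableSet_toMeasurable _ _
  have hNnull : P N = 0 := by
    rw [hN, measure_toMeasurable]
    exact ae_iff.mp hB.cont
  have hG : ∀ ω, ω ∉ N → ContinuousOn (fun t => B t ω) (Ici 0) := by
    intro ω hω
    by_contra h
    exact hω (subset_toMeasurable _ _ h)
  -- countable dense subset of A
  set A₀ : Set ℝ := A ∩ (Set.range ((↑) : ℚ → ℝ)) with hA₀
  have hA₀c : A₀.Countable := Set.Countable.mono inter_subset_right (countable_range _)
  haveI : Countable A₀ := hA₀c.to_subtype
  have hJm : Measurable (Jf B) := Jf_measurable hB.meas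
  have hWmeas : Measurable (fun ω => ⨅ x : A₀, Jf B ((x:ℝ), ω)) := by
    apply Measurable.iInf
    intro x
    exact hJm.comp (measurable_const.prodMk measurable_id)
  -- density of A₀ in A : approximation along sequences
  have hdense : ∀ (ω : Ω), ω ∉ N → ∀ t ∈ A, ∀ {ε : ℝ}, |B t ω| ≤ ε →
      (⨅ x : A₀, Jf B ((x:ℝ), ω)) ≤ ENNReal.ofReal ε := by
    intro ω hω t htA ε hBt
    have htA' := htA
    rw [hAF] at htA'
    obtain ⟨p, hpF, htp⟩ := mem_iUnion₂.mp htA'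
    set a : ℝ := (p.2 : ℝ) / 2 ^ p.1 with ha
    set b : ℝ := ((p.2 : ℝ) + 1) / 2 ^ p.1 with hb
    have h2p : (0:ℝ) < 2 ^ p.1 := by positivity
    have hab : a < b := by
      rw [ha, hb, div_lt_div_iff₀ h2p h2p]
      nlinarith
    have hIccA : Icc a b ⊆ A := by
      rw [hAF]
      exact subset_biUnion_of_mem (u := fun p : ℕ × ℕ => dyadicIcc p.1 p.2) hpF
    have htab : t ∈ Icc a b := htp
    have hseq : ∀ j : ℕ, ∃ r : ℝ, r ∈ A₀ ∧ |r - t| ≤ 1/((j:ℝ)+1) := by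
      intro j
      have hj : (0:ℝ) < 1/((j:ℝ)+1) := by positivity
      rcases eq_or_lt_of_le htab.1 with hta | hta
      · refine ⟨a, ⟨hIccA (left_mem_Icc.mpr hab.le), ⟨((p.2 : ℚ) / 2 ^ p.1), by push_cast; rfl⟩⟩, ?_⟩
        rw [← hta]
        simpa using hj.le
      · obtain ⟨q, hq1, hq2⟩ := exists_rat_btwn (show max a (t - 1/((j:ℝ)+1)) < t from
          max_lt hta (by linarith))
        have hqa : a < (q:ℝ) := lt_of_le_of_lt (le_max_left _ _) hq1
        have hqt : t - 1/((j:ℝ)+1) < (q:ℝ) := lt_of_le_of_lt (le_max_right _ _) hq1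
        refine ⟨(q:ℝ), ⟨hIccA ⟨hqa.le, le_trans hq2.le htab.2⟩, ⟨q, rfl⟩⟩, ?_⟩
        rw [abs_le]
        constructor <;> linarith
    choose u hu1 hu2 using hseq
    have hcont := hG ω hω
    have hJu : ∀ j, Jf B (u j, ω) = ENNReal.ofReal |B (u j) ω| :=
      fun j => Jf_eq hcont (hA0 _ (hu1 j).1)
    have htendu : Tendsto u atTop (𝓝[Ici 0] t) := by
      apply tendsto_nhdsWithin_of_tendsto_nhds_of_eventually_within
      · apply tendsto_of_tendsto_of_tendsto_of_le_of_le
          (g := fun j : ℕ => t - 1/((j:ℝ)+1)) (h := fun j : ℕ => t + 1/((j:ℝ)+1))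
        · have := tendsto_one_div_add_atTop_nhds_zero_nat (𝕜 := ℝ)
          have h2 : Tendsto (fun j : ℕ => t - 1/((j:ℝ)+1)) atTop (𝓝 (t - 0)) :=
            Tendsto.const_sub _ this
          simpa using h2
        · have := tendsto_one_div_add_atTop_nhds_zero_nat (𝕜 := ℝ)
          have h2 : Tendsto (fun j : ℕ => t + 1/((j:ℝ)+1)) atTop (𝓝 (t + 0)) :=
            Tendsto.const_add _ this
          simpa using h2
        · intro j
          have := abs_le.mp (hu2 j)
          linarith [this.1]
        · intro j
          have := abs_le.mp (hu2 j)
          linarith [this.2]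
      · exact Eventually.of_forall (fun j => hA0 _ (hu1 j).1)
    have hBtend : Tendsto (fun j => ENNReal.ofReal |B (u j) ω|) atTop
        (𝓝 (ENNReal.ofReal |B t ω|)) := by
      have h1 : Tendsto (fun j => B (u j) ω) atTop (𝓝 (B t ω)) :=
        ((hcont t (hA0 t htA)).tendsto).comp htendu
      exact (ENNReal.continuous_ofReal.tendsto _).comp
        ((continuous_abs.continuousAt).tendsto.comp h1)
    have hinf_le : (⨅ x : A₀, Jf B ((x:ℝ), ω)) ≤ ENNReal.ofReal |B t ω| := by
      apply ge_of_tendsto hBtend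
      apply Eventually.of_forall
      intro j
      have := iInf_le (fun x : A₀ => Jf B ((x:ℝ), ω)) ⟨u j, hu1 j⟩
      rwa [hJu j] at this
    exact hinf_le.trans (ENNReal.ofReal_le_ofReal hBt)
  -- the main one-scale estimate
  have main : ∀ ε : ℝ, 0 < ε → ε ≤ 1 →
      hitConst β c * μ A ^ 2 ≤
        P {ω | ω ∉ N ∧ (⨅ x : A₀, Jf B ((x:ℝ), ω)) ≤ ENNReal.ofReal ε} := by
    intro ε hε hε1
    set E : Set (ℝ × Ω) := {p | p.1 ∈ A ∧ Jf B p ≤ ENNReal.ofReal ε} with hE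
    have hEmeas : MeasurableSet E := by
      have : E = (Prod.fst ⁻¹' A) ∩ (Jf B ⁻¹' Iic (ENNReal.ofReal ε)) := rfl
      rw [this]
      exact (measurable_fst hAmeas).inter (hJm measurableSet_Iic)
    set Fn : ℝ × Ω → ℝ≥0∞ := E.indicator (fun _ => 1) with hFn
    have hFnmeas : Measurable Fn := measurable_const.indicator hEmeas
    have hFnsec : ∀ ω : Ω, Measurable (fun t => Fn (t, ω)) :=
      fun ω => hFnmeas.comp (measurable_id.prodMk measurable_const)
    have hFnsec' : ∀ t : ℝ, Measurable (fun ω => Fn (t, ω)) :=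
      fun t => hFnmeas.comp (measurable_const.prodMk measurable_id)
    set Z : Ω → ℝ≥0∞ := fun ω => ∫⁻ t, Fn (t, ω) ∂μ with hZ
    have hZmeas : Measurable Z := by
      have : Measurable (fun q : Ω × ℝ => Fn (q.2, q.1)) :=
        hFnmeas.comp (measurable_snd.prodMk measurable_fst)
      exact this.lintegral_prod_right'
    -- first moment lower bound
    set δ₀ : ℝ := Real.exp (-1) / Real.sqrt (2*Real.pi) with hδ₀
    have hδ₀pos : 0 < δ₀ := by
      rw [hδ₀]
      have := Real.pi_pos
      positivity
    have hEZ : ENNReal.ofReal (2 * ε * δ₀) * μ A ≤ ∫⁻ ω, Z ω ∂P := by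
      have hswap : ∫⁻ ω, Z ω ∂P = ∫⁻ t, ∫⁻ ω, Fn (t, ω) ∂P ∂μ := by
        rw [hZ]
        exact lintegral_lintegral_swap
          ((hFnmeas.comp (measurable_snd.prodMk measurable_fst)).aemeasurable)
      rw [hswap]
      have hpt : ∀ t ∈ A, ENNReal.ofReal (2 * ε * δ₀) ≤ ∫⁻ ω, Fn (t, ω) ∂P := by
        intro t htA
        have ht12 : 1/2 ≤ t := (hA htA).1
        have ht1 : t ≤ 1 := (hA htA).2
        have ht0 : 0 < t := by linarith
        set Et : Set Ω := (fun ω => ((t:ℝ), ω)) ⁻¹' E with hEt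
        have hEtmeas : MeasurableSet Et := (measurable_const.prodMk measurable_id) hEmeas
        have hval : (fun ω => Fn (t, ω)) = Et.indicator (fun _ => (1:ℝ≥0∞)) := by
          funext ω
          rw [hFn]
          by_cases h : ω ∈ Et
          · rw [indicator_of_mem h, indicator_of_mem (show (t,ω) ∈ E from h)]
          · rw [indicator_of_notMem h, indicator_of_notMem (show (t,ω) ∉ E from h)]
        have hint : ∫⁻ ω, Fn (t, ω) ∂P = P Et := by
          rw [hval, lintegral_indicator hEtmeas, setLIntegral_const, one_mul]
        rw [hint]
        have hsub : {ω | |B t ω| ≤ ε} ⊆ Et ∪ N := by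
          intro ω hω
          by_cases hωN : ω ∈ N
          · exact Or.inr hωN
          · left
            refine ⟨htA, ?_⟩
            rw [Jf_eq (hG ω hωN) (by linarith : (0:ℝ) ≤ t)]
            exact ENNReal.ofReal_le_ofReal hω
        have hlow : ENNReal.ofReal (2 * ε * δ₀) ≤ P {ω | |B t ω| ≤ ε} := by
          rw [prob_abs_le hB ht0]
          have hv1 : 1/2 ≤ (t.toNNReal : ℝ) := by rwa [Real.coe_toNNReal t ht0.le]
          have hv2 : (t.toNNReal : ℝ) ≤ 1 := by rwa [Real.coe_toNNReal t ht0.le]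
          exact gauss_lower t.toNNReal hv1 hv2 hε hε1
        calc ENNReal.ofReal (2 * ε * δ₀) ≤ P {ω | |B t ω| ≤ ε} := hlow
          _ ≤ P (Et ∪ N) := measure_mono hsub
          _ ≤ P Et + P N := measure_union_le _ _
          _ = P Et := by rw [hNnull, add_zero]
      calc ENNReal.ofReal (2 * ε * δ₀) * μ A
          = ∫⁻ t, A.indicator (fun _ => ENNReal.ofReal (2 * ε * δ₀)) t ∂μ := by
            rw [lintegral_indicator hAmeas, setLIntegral_const]
        _ ≤ ∫⁻ t, ∫⁻ ω, Fn (t, ω) ∂P ∂μ := by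
            apply lintegral_mono
            intro t
            by_cases h : t ∈ A
            · rw [indicator_of_mem h]; exact hpt t h
            · rw [indicator_of_notMem h]; exact zero_le'
    -- second moment upper bound
    have hEZ2 : ∫⁻ ω, (Z ω)^2 ∂P ≤
        ENNReal.ofReal (16 * ε^2) * energyConst β c * ENNReal.ofReal c := by
      have hZsq : ∀ ω, (Z ω)^2 = ∫⁻ t, ∫⁻ s, Fn (t, ω) * Fn (s, ω) ∂μ ∂μ := by
        intro ω
        rw [pow_two, hZ]
        rw [← lintegral_mul_const _ (hFnsec ω)]
        apply lintegral_congr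
        intro t
        rw [← lintegral_const_mul _ (hFnsec ω)]
      have hswap1 : ∫⁻ ω, (Z ω)^2 ∂P = ∫⁻ t, ∫⁻ ω, ∫⁻ s, Fn (t, ω) * Fn (s, ω) ∂μ ∂P ∂μ := by
        simp_rw [hZsq]
        apply lintegral_lintegral_swap
        apply Measurable.aemeasurable
        apply Measurable.lintegral_prod_right'
          (f := fun (q : (Ω × ℝ) × ℝ) => Fn (q.1.2, q.1.1) * Fn (q.2, q.1.1))
        apply Measurable.mul
        · exact hFnmeas.comp ((measurable_fst.snd).prodMk (measurable_fst.fst))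
        · exact hFnmeas.comp (measurable_snd.prodMk (measurable_fst.fst))
      have hswap2 : ∀ t : ℝ, ∫⁻ ω, ∫⁻ s, Fn (t, ω) * Fn (s, ω) ∂μ ∂P
          = ∫⁻ s, ∫⁻ ω, Fn (t, ω) * Fn (s, ω) ∂P ∂μ := by
        intro t
        apply lintegral_lintegral_swap
        apply Measurable.aemeasurable
        apply Measurable.mul
        · exact hFnmeas.comp (measurable_const.prodMk measurable_fst)
        · exact hFnmeas.comp (measurable_snd.prodMk measurable_fst)
      -- pointwise kernel bound
      have hker : ∀ t ∈ A, ∀ s ∈ A, ∫⁻ ω, Fn (t, ω) * Fn (s, ω) ∂P ≤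
          ENNReal.ofReal (16 * ε^2) * (ENNReal.ofReal |t - s|) ^ (-(1/2) : ℝ) := by
        intro t htA s hsA
        set Et : Set Ω := (fun ω => ((t:ℝ), ω)) ⁻¹' E with hEt
        set Es : Set Ω := (fun ω => ((s:ℝ), ω)) ⁻¹' E with hEs
        have hEtmeas : MeasurableSet Et := (measurable_const.prodMk measurable_id) hEmeas
        have hEsmeas : MeasurableSet Es := (measurable_const.prodMk measurable_id) hEmeas
        have hprod : (fun ω => Fn (t, ω) * Fn (s, ω)) =
            (Et ∩ Es).indicator (fun _ => (1:ℝ≥0∞)) := by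
          funext ω
          rw [hFn]
          by_cases h1 : ω ∈ Et <;> by_cases h2 : ω ∈ Es
          · rw [indicator_of_mem (show (t,ω) ∈ E from h1), indicator_of_mem (show (s,ω) ∈ E from h2),
              indicator_of_mem (mem_inter h1 h2), mul_one]
          · rw [indicator_of_notMem (show (s,ω) ∉ E from h2), mul_zero,
              indicator_of_notMem (fun hm => h2 hm.2)]
          · rw [indicator_of_notMem (show (t,ω) ∉ E from h1), zero_mul,
              indicator_of_notMem (fun hm => h1 hm.1)]
          · rw [indicator_of_notMem (show (t,ω) ∉ E from h1), zero_mul,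
              indicator_of_notMem (fun hm => h1 hm.1)]
        have hintK : ∫⁻ ω, Fn (t, ω) * Fn (s, ω) ∂P = P (Et ∩ Es) := by
          rw [show (fun ω => Fn (t, ω) * Fn (s, ω)) = (Et ∩ Es).indicator (fun _ => (1:ℝ≥0∞)) from hprod]
          rw [lintegral_indicator (hEtmeas.inter hEsmeas), setLIntegral_const, one_mul]
        rw [hintK]
        have hsubJ : Et ∩ Es ⊆ ({ω | |B t ω| ≤ ε} ∩ {ω | |B s ω| ≤ ε}) ∪ N := by
          rintro ω ⟨h1, h2⟩
          by_cases hωN : ω ∈ N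
          · exact Or.inr hωN
          · left
            have h1' := h1.2
            have h2' := h2.2
            rw [Jf_eq (hG ω hωN) (hA0 t htA)] at h1'
            rw [Jf_eq (hG ω hωN) (hA0 s hsA)] at h2'
            exact ⟨(ENNReal.ofReal_le_ofReal_iff hε.le).mp h1',
              (ENNReal.ofReal_le_ofReal_iff hε.le).mp h2'⟩
        have hP2 : P ({ω | |B t ω| ≤ ε} ∩ {ω | |B s ω| ≤ ε}) ≤
            ENNReal.ofReal (16 * ε^2) * (ENNReal.ofReal |t - s|) ^ (-(1/2) : ℝ) := by
          rcases lt_trichotomy t s with hts | hts | hts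
          · have hpb := pair_bound hB (hA htA).1 hts hε
            rw [abs_of_neg (by linarith : t - s < 0), neg_sub]
            exact hpb
          · rw [hts]
            simp only [sub_self, abs_zero, ENNReal.ofReal_zero]
            rw [ENNReal.zero_rpow_of_neg (by norm_num)]
            rw [ENNReal.mul_top (by
              simp only [ne_eq, ENNReal.ofReal_eq_zero, not_le]
              positivity)]
            exact le_top
          · have hpb := pair_bound hB (hA hsA).1 hts hε
            rw [inter_comm] at hpb
            rw [abs_of_pos (by linarith : 0 < t - s)]
            exact hpb
        calc P (Et ∩ Es) ≤ P (({ω | |B t ω| ≤ ε} ∩ {ω | |B s ω| ≤ ε}) ∪ N) := measure_mono hsubJ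
          _ ≤ P ({ω | |B t ω| ≤ ε} ∩ {ω | |B s ω| ≤ ε}) + P N := measure_union_le _ _
          _ = P ({ω | |B t ω| ≤ ε} ∩ {ω | |B s ω| ≤ ε}) := by rw [hNnull, add_zero]
          _ ≤ _ := hP2
      -- kernel vanishes off A
      have hker0 : ∀ t : ℝ, t ∉ A → ∀ ω, Fn (t, ω) = 0 := by
        intro t ht ω
        rw [hFn, indicator_of_notMem (by intro hmem; exact ht hmem.1)]
      -- inner integral bound
      have hinner : ∀ t : ℝ, ∫⁻ s, ∫⁻ ω, Fn (t, ω) * Fn (s, ω) ∂P ∂μ ≤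
          A.indicator (fun _ => ENNReal.ofReal (16 * ε^2) * energyConst β c) t := by
        intro t
        by_cases htA : t ∈ A
        · rw [indicator_of_mem htA]
          calc ∫⁻ s, ∫⁻ ω, Fn (t, ω) * Fn (s, ω) ∂P ∂μ
              ≤ ∫⁻ s, A.indicator
                  (fun s => ENNReal.ofReal (16 * ε^2) * (ENNReal.ofReal |t - s|) ^ (-(1/2) : ℝ)) s ∂μ := by
                apply lintegral_mono
                intro s
                by_cases hsA : s ∈ A
                · rw [indicator_of_mem hsA]; exact hker t htA s hsA
                · rw [indicator_of_notMem hsA]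
                  have : ∀ ω, Fn (t, ω) * Fn (s, ω) = 0 := by
                    intro ω; rw [hker0 s hsA ω, mul_zero]
                  simp_rw [this, lintegral_zero]
                  exact le_rfl
            _ = ∫⁻ s in A, ENNReal.ofReal (16 * ε^2) * (ENNReal.ofReal |t - s|) ^ (-(1/2) : ℝ) ∂μ :=
                lintegral_indicator hAmeas _
            _ ≤ ∫⁻ s in Icc (0:ℝ) 1, ENNReal.ofReal (16 * ε^2) * (ENNReal.ofReal |t - s|) ^ (-(1/2) : ℝ) ∂μ :=
                lintegral_mono' (Measure.restrict_mono hA01 le_rfl) le_rfl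
            _ = ENNReal.ofReal (16 * ε^2) * ∫⁻ s in Icc (0:ℝ) 1, (ENNReal.ofReal |t - s|) ^ (-(1/2) : ℝ) ∂μ :=
                lintegral_const_mul' _ _ ENNReal.ofReal_ne_top
            _ ≤ ENNReal.ofReal (16 * ε^2) * energyConst β c :=
                mul_le_mul_right (energy_bound hβ hc hsupp hμ t (hA01 htA)) _
        · rw [indicator_of_notMem htA]
          have : ∀ s : ℝ, ∫⁻ ω, Fn (t, ω) * Fn (s, ω) ∂P = 0 := by
            intro s
            have : ∀ ω, Fn (t, ω) * Fn (s, ω) = 0 := by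
              intro ω; rw [hker0 t htA ω, zero_mul]
            simp_rw [this, lintegral_zero]
          simp_rw [this, lintegral_zero]
          exact le_rfl
      calc ∫⁻ ω, (Z ω)^2 ∂P = ∫⁻ t, ∫⁻ ω, ∫⁻ s, Fn (t, ω) * Fn (s, ω) ∂μ ∂P ∂μ := hswap1
        _ = ∫⁻ t, ∫⁻ s, ∫⁻ ω, Fn (t, ω) * Fn (s, ω) ∂P ∂μ ∂μ := by
            apply lintegral_congr
            intro t
            exact hswap2 t
        _ ≤ ∫⁻ t, A.indicator (fun _ => ENNReal.ofReal (16 * ε^2) * energyConst β c) t ∂μ :=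
            lintegral_mono hinner
        _ = ENNReal.ofReal (16 * ε^2) * energyConst β c * μ A := by
            rw [lintegral_indicator hAmeas, setLIntegral_const]
        _ ≤ ENNReal.ofReal (16 * ε^2) * energyConst β c * ENNReal.ofReal c := by
            apply mul_le_mul_right
            exact (measure_mono (subset_univ A)).trans (mu_univ_le hsupp hμ)
    -- Paley–Zygmund
    have hPZ := paley_zygmund P Z hZmeas
    -- conclude: hitConst * μ A ^ 2 ≤ P {0 < Z}
    have hstep : hitConst β c * μ A ^ 2 ≤ P {ω | 0 < Z ω} := by
      set R : ℝ≥0∞ := ENNReal.ofReal 16 * energyConst β c * ENNReal.ofReal c with hR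
      have hRne0 : R ≠ 0 := by
        have h1 : (ENNReal.ofReal 16 : ℝ≥0∞) ≠ 0 := by
          simp only [ne_eq, ENNReal.ofReal_eq_zero, not_le]; norm_num
        have h2 : energyConst β c ≠ 0 := by
          unfold energyConst
          apply mul_ne_zero
          · simp only [ne_eq, ENNReal.ofReal_eq_zero, not_le]
            have h2β : (0:ℝ) < (2:ℝ)^β := Real.rpow_pos_of_pos (by norm_num) β
            positivity
          · simp only [ne_eq, ENNReal.inv_eq_zero]
            exact (tsub_le_self.trans_lt ENNReal.one_lt_top).ne
        have h3 : (ENNReal.ofReal c : ℝ≥0∞) ≠ 0 := by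
          simp only [ne_eq, ENNReal.ofReal_eq_zero, not_le]; exact hc
        rw [hR]; exact mul_ne_zero (mul_ne_zero h1 h2) h3
      have hRnetop : R ≠ ⊤ := by
        rw [hR]
        apply ENNReal.mul_ne_top (ENNReal.mul_ne_top ENNReal.ofReal_ne_top
          (energyConst_lt_top hβ).ne) ENNReal.ofReal_ne_top
      have hεsq : (ENNReal.ofReal (ε^2) : ℝ≥0∞) ≠ 0 := by
        simp only [ne_eq, ENNReal.ofReal_eq_zero, not_le]; positivity
      have hεsqtop : (ENNReal.ofReal (ε^2) : ℝ≥0∞) ≠ ⊤ := ENNReal.ofReal_ne_top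
      -- chain of inequalities
      have hchain : ENNReal.ofReal (ε^2) * (ENNReal.ofReal (4 * δ₀^2) * μ A ^ 2)
          ≤ ENNReal.ofReal (ε^2) * (R * P {ω | 0 < Z ω}) := by
        calc ENNReal.ofReal (ε^2) * (ENNReal.ofReal (4 * δ₀^2) * μ A ^ 2)
            = (ENNReal.ofReal (2 * ε * δ₀) * μ A)^2 := by
              rw [mul_pow, ← ENNReal.ofReal_pow (by positivity), ← mul_assoc,
                ← ENNReal.ofReal_mul (by positivity)]
              congr 2
              ring
          _ ≤ (∫⁻ ω, Z ω ∂P)^2 := pow_le_pow_left' hEZ 2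
          _ ≤ (∫⁻ ω, (Z ω)^2 ∂P) * P {ω | 0 < Z ω} := hPZ
          _ ≤ (ENNReal.ofReal (16 * ε^2) * energyConst β c * ENNReal.ofReal c)
                * P {ω | 0 < Z ω} := mul_le_mul_left hEZ2 _
          _ = ENNReal.ofReal (ε^2) * (R * P {ω | 0 < Z ω}) := by
              rw [hR]
              rw [show (16:ℝ) * ε^2 = ε^2 * 16 by ring, ENNReal.ofReal_mul (by positivity)]
              ring
      have hcancel : ENNReal.ofReal (4 * δ₀^2) * μ A ^ 2 ≤ R * P {ω | 0 < Z ω} :=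
        (ENNReal.mul_le_mul_iff_right hεsq hεsqtop).mp hchain
      have hfinal : hitConst β c * μ A ^ 2 ≤ P {ω | 0 < Z ω} := by
        unfold hitConst
        rw [← hR, ← hδ₀]
        calc ENNReal.ofReal (4 * δ₀^2) * R⁻¹ * μ A ^ 2
            = R⁻¹ * (ENNReal.ofReal (4 * δ₀^2) * μ A ^ 2) := by ring
          _ ≤ R⁻¹ * (R * P {ω | 0 < Z ω}) := mul_le_mul_right hcancel _
          _ = (R⁻¹ * R) * P {ω | 0 < Z ω} := by ring
          _ = P {ω | 0 < Z ω} := by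
              rw [ENNReal.inv_mul_cancel hRne0 hRnetop, one_mul]
      exact hfinal
    -- {0 < Z} is a.e. contained in the inf event
    have hsubZ : {ω | 0 < Z ω} ⊆
        {ω | ω ∉ N ∧ (⨅ x : A₀, Jf B ((x:ℝ), ω)) ≤ ENNReal.ofReal ε} ∪ N := by
      intro ω hω
      by_cases hωN : ω ∈ N
      · exact Or.inr hωN
      · left
        refine ⟨hωN, ?_⟩
        have hex : ∃ t : ℝ, Fn (t, ω) ≠ 0 := by
          by_contra h
          push_neg at h
          have : Z ω = 0 := by
            rw [hZ]
            simp_rw [h]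
            exact lintegral_zero
          rw [mem_setOf_eq, this] at hω
          exact lt_irrefl 0 hω
        obtain ⟨t, hFnt⟩ := hex
        have htE : (t, ω) ∈ E := by
          by_contra h
          exact hFnt (indicator_of_notMem h _)
        obtain ⟨htA, hJt⟩ := htE
        have hBt : |B t ω| ≤ ε := by
          rw [Jf_eq (hG ω hωN) (hA0 t htA)] at hJt
          exact (ENNReal.ofReal_le_ofReal_iff hε.le).mp hJt
        exact hdense ω hωN t htA hBt
    calc hitConst β c * μ A ^ 2 ≤ P {ω | 0 < Z ω} := hstep
      _ ≤ P ({ω | ω ∉ N ∧ (⨅ x : A₀, Jf B ((x:ℝ), ω)) ≤ ENNReal.ofReal ε} ∪ N) :=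
          measure_mono hsubZ
      _ ≤ P {ω | ω ∉ N ∧ (⨅ x : A₀, Jf B ((x:ℝ), ω)) ≤ ENNReal.ofReal ε} + P N :=
          measure_union_le _ _
      _ = _ := by rw [hNnull, add_zero]
  -- take ε = 1/(m+1) and let m → ∞
  set Fm : ℕ → Set Ω := fun m =>
    {ω | ω ∉ N ∧ (⨅ x : A₀, Jf B ((x:ℝ), ω)) ≤ ENNReal.ofReal (1/((m:ℝ)+1))} with hFm
  have hFm_meas : ∀ m, MeasurableSet (Fm m) := by
    intro m
    exact hNmeas.compl.inter (hWmeas measurableSet_Iic)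
  have hFm_anti : Antitone Fm := by
    intro m m' hmm'
    intro ω hω
    refine ⟨hω.1, hω.2.trans (ENNReal.ofReal_le_ofReal ?_)⟩
    apply one_div_le_one_div_of_le (by positivity)
    have : (m:ℝ) ≤ (m':ℝ) := by exact_mod_cast hmm'
    linarith
  have hFm_lb : ∀ m, hitConst β c * μ A ^ 2 ≤ P (Fm m) := by
    intro m
    apply main
    · positivity
    · rw [div_le_one (by positivity)]
      have : (0:ℝ) ≤ (m:ℝ) := Nat.cast_nonneg m
      linarith
  have htendF : Tendsto (P ∘ Fm) atTop (𝓝 (P (⋂ m, Fm m))) :=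
    tendsto_measure_iInter_atTop (fun m => (hFm_meas m).nullMeasurableSet) hFm_anti
      ⟨0, measure_ne_top P _⟩
  have hPinter : hitConst β c * μ A ^ 2 ≤ P (⋂ m, Fm m) :=
    ge_of_tendsto htendF (Eventually.of_forall hFm_lb)
  -- the intersection is contained in the hitting event
  have hinter_sub : (⋂ m, Fm m) ⊆ {ω | ∃ t ∈ A, B t ω = 0} := by
    intro ω hω
    have hωN : ω ∉ N := (mem_iInter.mp hω 0).1
    have hcont := hG ω hωN
    have hWm : ∀ m : ℕ, ∃ x : A₀, Jf B ((x:ℝ), ω) < ENNReal.ofReal (2/((m:ℝ)+1)) := by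
      intro m
      have h1 := (mem_iInter.mp hω m).2
      have h2 : ENNReal.ofReal (1/((m:ℝ)+1)) < ENNReal.ofReal (2/((m:ℝ)+1)) := by
        rw [ENNReal.ofReal_lt_ofReal_iff (by positivity)]
        rw [div_lt_div_iff_of_pos_right (by positivity)]
        norm_num
      exact iInf_lt_iff.mp (lt_of_le_of_lt h1 h2)
    choose x hx using hWm
    have hxA : ∀ m, ((x m : ℝ) : ℝ) ∈ A := fun m => (x m).2.1
    have hxB : ∀ m : ℕ, |B ((x m : ℝ)) ω| < 2/((m:ℝ)+1) := by
      intro m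
      have := hx m
      rw [Jf_eq hcont (hA0 _ (hxA m))] at this
      exact (ENNReal.ofReal_lt_ofReal_iff_of_nonneg (abs_nonneg _)).mp this
    obtain ⟨a, haA, φ, hφ, hlim⟩ := hAcomp.tendsto_subseq (x := fun m => ((x m : ℝ))) hxA
    have hlim' : Tendsto (fun m => ((x (φ m) : ℝ))) atTop (𝓝[Ici 0] a) := by
      apply tendsto_nhdsWithin_of_tendsto_nhds_of_eventually_within _ hlim
      exact Eventually.of_forall (fun m => hA0 _ (hxA (φ m)))
    have hBlim : Tendsto (fun m => B ((x (φ m) : ℝ)) ω) atTop (𝓝 (B a ω)) :=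
      ((hcont a (hA0 a haA)).tendsto).comp hlim'
    have habs : Tendsto (fun m => |B ((x (φ m) : ℝ)) ω|) atTop (𝓝 |B a ω|) :=
      ((continuous_abs.continuousAt).tendsto).comp hBlim
    have habs0 : Tendsto (fun m => |B ((x (φ m) : ℝ)) ω|) atTop (𝓝 0) := by
      apply tendsto_of_tendsto_of_tendsto_of_le_of_le (g := fun _ => (0:ℝ))
        (h := fun m : ℕ => 2/((m:ℝ)+1)) tendsto_const_nhds
      · have h0 := tendsto_one_div_add_atTop_nhds_zero_nat (𝕜 := ℝ)
        have h2 : Tendsto (fun m : ℕ => 2 * (1/((m:ℝ)+1))) atTop (𝓝 (2 * 0)) :=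
          h0.const_mul 2
        simpa [div_eq_mul_inv] using h2
      · exact fun m => abs_nonneg _
      · intro m
        have h1 := (hxB (φ m)).le
        have h2 : 2/((φ m : ℝ)+1) ≤ 2/((m:ℝ)+1) := by
          apply div_le_div_of_nonneg_left (by norm_num) (by positivity)
          have : (m:ℝ) ≤ (φ m : ℝ) := by exact_mod_cast hφ.le_apply
          linarith
        linarith
    have : |B a ω| = 0 := tendsto_nhds_unique habs habs0
    exact ⟨a, haA, abs_eq_zero.mp this⟩
  exact hPinter.trans (measure_mono hinter_sub)




lemma hitConst_ne_zero {β c : ℝ} (hβ : 1/2 < β) (hc : 0 < c) : hitConst β c ≠ 0 := by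
  unfold hitConst
  apply mul_ne_zero
  · simp only [ne_eq, ENNReal.ofReal_eq_zero, not_le]
    have := Real.pi_pos
    have h1 : 0 < Real.exp (-1) / Real.sqrt (2*Real.pi) := by positivity
    positivity
  · simp only [ne_eq, ENNReal.inv_eq_zero]
    exact ENNReal.mul_ne_top (ENNReal.mul_ne_top ENNReal.ofReal_ne_top
      (energyConst_lt_top hβ).ne) ENNReal.ofReal_ne_top

lemma energyConst_ne_zero {β c : ℝ} (hc : 0 < c) : energyConst β c ≠ 0 := by
  unfold energyConst
  apply mul_ne_zero
  · simp only [ne_eq, ENNReal.ofReal_eq_zero, not_le]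
    have h2β : (0:ℝ) < (2:ℝ)^β := Real.rpow_pos_of_pos (by norm_num) β
    positivity
  · simp only [ne_eq, ENNReal.inv_eq_zero]
    exact (tsub_le_self.trans_lt ENNReal.one_lt_top).ne

lemma hitConst_ne_top {β c : ℝ} (hβ : 1/2 < β) (hc : 0 < c) : hitConst β c ≠ ⊤ := by
  unfold hitConst
  apply ENNReal.mul_ne_top ENNReal.ofReal_ne_top
  simp only [ne_eq, ENNReal.inv_eq_top]
  have h1 : (ENNReal.ofReal 16 : ℝ≥0∞) ≠ 0 := by
    simp only [ne_eq, ENNReal.ofReal_eq_zero, not_le]; norm_num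
  have h3 : (ENNReal.ofReal c : ℝ≥0∞) ≠ 0 := by
    simp only [ne_eq, ENNReal.ofReal_eq_zero, not_le]; exact hc
  exact mul_ne_zero (mul_ne_zero h1 (energyConst_ne_zero hc)) h3

/-- Second-moment hitting estimate: if `β > 1/2` and `μ` is a finite Borel
measure on `[0,1]` with `μ(I) ≤ c·|I|^β` for every dyadic interval `I`, then
there is a constant `c' > 0` such that for every `A ⊆ [1/2, 1]` which is a
countable union of closed dyadic intervals,
`P(Z_B ∩ A ≠ ∅) ≥ c'·μ(A)²`. -/
theorem stmt_4 {Ω : Type} [MeasurableSpace Ω] (P : Measure Ω) (B : ℝ → Ω → ℝ)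
    (hB : IsStdBM P B) (β c : ℝ) (hβ : 1 / 2 < β) (hc : 0 < c)
    (μ : Measure ℝ) [IsFiniteMeasure μ] (hsupp : μ (Icc (0 : ℝ) 1)ᶜ = 0)
    (hμ : ∀ n k : ℕ, k < 2 ^ n →
      μ (dyadicIcc n k) ≤ ENNReal.ofReal (c * (2 : ℝ) ^ (-β * (n : ℝ)))) :
    ∃ c' > (0 : ℝ), ∀ A : Set ℝ, A ⊆ Icc (1 / 2 : ℝ) 1 →
      (∃ S : Set (ℕ × ℕ), S.Countable ∧ (∀ p ∈ S, p.2 < 2 ^ p.1) ∧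
        A = ⋃ p ∈ S, dyadicIcc p.1 p.2) →
      ENNReal.ofReal c' * μ A ^ 2 ≤ P {ω | ∃ t ∈ A, B t ω = 0} := by
  refine ⟨(hitConst β c).toReal, ENNReal.toReal_pos (hitConst_ne_zero hβ hc)
    (hitConst_ne_top hβ hc), ?_⟩
  intro A hA hS
  obtain ⟨S, hScount, _hSlt, hAS⟩ := hS
  rw [ENNReal.ofReal_toReal (hitConst_ne_top hβ hc)]
  by_cases hSne : S.Nonempty
  swap
  · rw [not_nonempty_iff_eq_empty] at hSne
    rw [hAS, hSne]
    simp
  obtain ⟨e, hSe⟩ := Set.Countable.exists_eq_range hScount hSne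
  set Am : ℕ → Set ℝ := fun m => ⋃ p ∈ (Finset.range (m+1)).image e, dyadicIcc p.1 p.2 with hAm
  have hAmA : ∀ m, Am m ⊆ A := by
    intro m
    rw [hAm, hAS, hSe]
    intro x hx
    obtain ⟨p, hp, hxp⟩ := mem_iUnion₂.mp hx
    obtain ⟨i, _, hip⟩ := Finset.mem_image.mp hp
    exact mem_iUnion₂.mpr ⟨p, ⟨i, hip⟩, hxp⟩
  have hAmmono : Monotone Am := by
    intro m m' hmm'
    rw [hAm]
    apply biUnion_subset_biUnion_left
    intro p hp
    obtain ⟨i, hi, hip⟩ := Finset.mem_image.mp hp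
    exact Finset.mem_coe.mpr (Finset.mem_image.mpr ⟨i,
      Finset.mem_range.mpr (lt_of_lt_of_le (Finset.mem_range.mp hi) (by omega)), hip⟩)
  have hAunion : ⋃ m, Am m = A := by
    apply subset_antisymm (iUnion_subset fun m => hAmA m)
    rw [hAS, hSe]
    intro x hx
    obtain ⟨p, hp, hxp⟩ := mem_iUnion₂.mp hx
    obtain ⟨i, hip⟩ := hp
    apply mem_iUnion.mpr ⟨i, ?_⟩
    rw [hAm]
    exact mem_iUnion₂.mpr ⟨p, Finset.mem_image.mpr ⟨i, Finset.mem_range.mpr (by omega), hip⟩, hxp⟩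
  have hμlim : μ A = ⨆ m, μ (Am m) := by
    rw [← hAunion]
    exact Directed.measure_iUnion (hAmmono.directed_le)
  have hkey : ∀ m, hitConst β c * μ (Am m) ^ 2 ≤ P {ω | ∃ t ∈ A, B t ω = 0} := by
    intro m
    refine (key P B hB β c hβ hc μ hsupp hμ (Am m) ((hAmA m).trans hA)
      ⟨(Finset.range (m+1)).image e, rfl⟩).trans (measure_mono ?_)
    rintro ω ⟨t, ht, hBt⟩
    exact ⟨t, hAmA m ht, hBt⟩
  rw [hμlim]
  have hsq : (⨆ m, μ (Am m))^2 = ⨆ m, (μ (Am m))^2 := by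
    apply le_antisymm
    · rw [pow_two, ENNReal.iSup_mul]
      apply iSup_le; intro i
      rw [ENNReal.mul_iSup]
      apply iSup_le; intro j
      calc μ (Am i) * μ (Am j) ≤ μ (Am (max i j)) * μ (Am (max i j)) :=
            mul_le_mul' (measure_mono (hAmmono (le_max_left i j)))
              (measure_mono (hAmmono (le_max_right i j)))
        _ = μ (Am (max i j))^2 := (pow_two _).symm
        _ ≤ ⨆ m, (μ (Am m))^2 := le_iSup (fun m => (μ (Am m))^2) (max i j)
    · exact iSup_le (fun m => pow_le_pow_left' (le_iSup (fun m => μ (Am m)) m) 2)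
  rw [hsq, ENNReal.mul_iSup]
  exact iSup_le hkey
end

section
/- Let B be a standard one-dimensional Brownian motion started at 0, regarded as a random element of C[0,1]. Almost surely the following holds: for every c < √2 and every h₀ > 0, there exist t ∈ [0,1] and h ∈ (0, h₀) with t + h ≤ 1 such that |B(t+h) − B(t)| > c·√(h·log(1/h)). -/
open MeasureTheory ProbabilityTheory Set

section LevyHelpers
open Real Filter Topology
set_option maxHeartbeats 1000000


lemma pdf_eval {v : ℝ} (hv : 0 < v) (x : ℝ) :
    gaussianPDFReal 0 v.toNNReal x = (Real.sqrt (2*π*v))⁻¹ * Real.exp (-x^2/(2*v)) := by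
  simp [gaussianPDFReal, Real.coe_toNNReal _ hv.le]

lemma gauss_Ioc_lb {v : ℝ} (hv : 0 < v) {a : ℝ} (ha : 0 ≤ a) :
    ENNReal.ofReal (Real.sqrt v * gaussianPDFReal 0 v.toNNReal (a + Real.sqrt v))
      ≤ gaussianReal 0 v.toNNReal (Set.Ioc a (a + Real.sqrt v)) := by
  have hv' : v.toNNReal ≠ 0 := by
    simp only [ne_eq, Real.toNNReal_eq_zero, not_le]; exact hv
  have hsv : 0 < Real.sqrt v := Real.sqrt_pos.2 hv
  rw [gaussianReal_apply_eq_integral _ hv']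
  apply ENNReal.ofReal_le_ofReal
  calc Real.sqrt v * gaussianPDFReal 0 v.toNNReal (a + Real.sqrt v)
      = ∫ _x in Set.Ioc a (a + Real.sqrt v), gaussianPDFReal 0 v.toNNReal (a + Real.sqrt v) := by
        rw [setIntegral_const]
        rw [measureReal_def, Real.volume_Ioc]
        simp [ENNReal.toReal_ofReal hsv.le, smul_eq_mul]
    _ ≤ ∫ x in Set.Ioc a (a + Real.sqrt v), gaussianPDFReal 0 v.toNNReal x := by
        apply setIntegral_mono_on
        · exact integrableOn_const (by rw [Real.volume_Ioc]; exact ENNReal.ofReal_ne_top)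
        · exact (integrable_gaussianPDFReal _ _).integrableOn
        · exact measurableSet_Ioc
        · intro x hx
          rw [pdf_eval hv, pdf_eval hv]
          apply mul_le_mul_of_nonneg_left _ (by positivity)
          apply Real.exp_le_exp.2
          have hx0 : 0 < x := lt_of_le_of_lt ha hx.1
          have hx2 : x^2 ≤ (a + Real.sqrt v)^2 := by nlinarith [hx.1, hx.2]
          have h2v : 0 < 2*v := by linarith
          rw [neg_div, neg_div, neg_le_neg_iff]
          exact div_le_div_of_nonneg_right hx2 h2v.le

lemma gauss_abs_le {v a : ℝ} (hv : 0 < v) (ha : 0 ≤ a) :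
    gaussianReal 0 v.toNNReal {x : ℝ | |x| ≤ a}
      ≤ ENNReal.ofReal (Real.exp (-(Real.sqrt v * gaussianPDFReal 0 v.toNNReal (a + Real.sqrt v)))) := by
  set r : ℝ := Real.sqrt v * gaussianPDFReal 0 v.toNNReal (a + Real.sqrt v) with hr
  have hr0 : 0 ≤ r := mul_nonneg (Real.sqrt_nonneg _) (gaussianPDFReal_nonneg _ _ _)
  set μ := gaussianReal 0 v.toNNReal
  have hdisj : Disjoint {x : ℝ | |x| ≤ a} (Set.Ioc a (a + Real.sqrt v)) := by
    rw [Set.disjoint_left]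
    intro x hx hx'
    exact absurd hx'.1 (not_lt.2 ((le_abs_self x).trans hx))
  have hunion : μ {x : ℝ | |x| ≤ a} + μ (Set.Ioc a (a + Real.sqrt v)) ≤ 1 := by
    rw [← measure_union hdisj measurableSet_Ioc]
    exact prob_le_one
  have h1 : μ {x : ℝ | |x| ≤ a} ≤ 1 - ENNReal.ofReal r := by
    have := (gauss_Ioc_lb hv ha)
    have h2 : μ {x : ℝ | |x| ≤ a} + ENNReal.ofReal r ≤ 1 :=
      le_trans (add_le_add le_rfl this) hunion
    exact ENNReal.le_sub_of_add_le_right ENNReal.ofReal_ne_top h2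
  refine h1.trans ?_
  rw [← ENNReal.ofReal_one, ← ENNReal.ofReal_sub _ hr0]
  exact ENNReal.ofReal_le_ofReal (by linarith [Real.add_one_le_exp (-r)])

lemma level_bound {Ω : Type} [MeasurableSpace Ω] (P : Measure Ω) (B : ℝ → Ω → ℝ)
    (hB : IsStdBM P B) (n : ℕ) {a : ℝ} (ha : 0 ≤ a) :
    P (⋂ i : Fin (2^n), {ω | |B (((i:ℕ)+1) * ((2:ℝ)^n)⁻¹) ω - B ((i:ℕ) * ((2:ℝ)^n)⁻¹) ω| ≤ a})
      ≤ ENNReal.ofReal (Real.exp (-((2^n : ℕ) * (Real.sqrt (((2:ℝ)^n)⁻¹) *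
          gaussianPDFReal 0 (((2:ℝ)^n)⁻¹).toNNReal (a + Real.sqrt (((2:ℝ)^n)⁻¹)))))) := by
  set v : ℝ := ((2:ℝ)^n)⁻¹ with hv_def
  have hv : 0 < v := by positivity
  set t : Fin (2^n + 1) → ℝ := fun j => (j:ℕ) * v with ht
  have hmono : Monotone t := fun j k hjk =>
    mul_le_mul_of_nonneg_right (by exact_mod_cast hjk) hv.le
  have hnn : ∀ j, 0 ≤ t j := fun j => by positivity
  have hInd := hB.indepIncr (2^n) t hmono hnn
  have hE : MeasurableSet {x : ℝ | |x| ≤ a} :=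
    (isClosed_le continuous_abs continuous_const).measurableSet
  set f : Fin (2^n) → Ω → ℝ := fun i ω => B (t i.succ) ω - B (t i.castSucc) ω with hf
  have hfi : ∀ i : Fin (2^n), f i = fun ω => B ((i:ℕ)*v + v) ω - B ((i:ℕ)*v) ω := by
    intro i
    have h1 : t i.succ = (i:ℕ)*v + v := by
      simp only [ht, Fin.val_succ]; push_cast; ring
    have h2 : t i.castSucc = (i:ℕ)*v := by
      simp only [ht, Fin.coe_castSucc]
    funext ω; show B (t i.succ) ω - B (t i.castSucc) ω = _; rw [h1, h2]
  have hmap : ∀ i : Fin (2^n), P.map (f i) = gaussianReal 0 v.toNNReal := by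
    intro i
    rw [hfi i]
    exact hB.gaussIncr ((i:ℕ)*v) v (by positivity) hv
  have hset : (⋂ i : Fin (2^n), {ω | |B (((i:ℕ)+1) * v) ω - B ((i:ℕ) * v) ω| ≤ a})
      = ⋂ i ∈ Finset.univ, f i ⁻¹' {x : ℝ | |x| ≤ a} := by
    simp only [Finset.mem_univ, Set.iInter_true]
    apply Set.iInter_congr
    intro i
    ext ω
    rw [hfi i]
    simp only [Set.mem_setOf_eq, Set.mem_preimage]
    constructor <;> intro h <;> (convert h using 3 <;> ring)
  rw [hset, hInd.measure_inter_preimage_eq_mul Finset.univ (fun i _ => hE)]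
  have hfactor : ∀ i : Fin (2^n), P (f i ⁻¹' {x : ℝ | |x| ≤ a})
      ≤ ENNReal.ofReal (Real.exp (-(Real.sqrt v * gaussianPDFReal 0 v.toNNReal (a + Real.sqrt v)))) := by
    intro i
    have hm : Measurable (f i) := by rw [hfi i]; exact (hB.meas _).sub (hB.meas _)
    rw [← Measure.map_apply hm hE, hmap i]
    exact gauss_abs_le hv ha
  calc ∏ i : Fin (2^n), P (f i ⁻¹' {x : ℝ | |x| ≤ a})
      ≤ ∏ _i : Fin (2^n), ENNReal.ofReal (Real.exp (-(Real.sqrt v * gaussianPDFReal 0 v.toNNReal (a + Real.sqrt v)))) :=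
        Finset.prod_le_prod' (fun i _ => hfactor i)
    _ = ENNReal.ofReal (Real.exp (-(Real.sqrt v * gaussianPDFReal 0 v.toNNReal (a + Real.sqrt v)))) ^ (2^n) := by
        rw [Finset.prod_const, Finset.card_univ, Fintype.card_fin]
    _ = ENNReal.ofReal (Real.exp (-(Real.sqrt v * gaussianPDFReal 0 v.toNNReal (a + Real.sqrt v))) ^ (2^n)) := by
        rw [ENNReal.ofReal_pow (Real.exp_nonneg _)]
    _ = ENNReal.ofReal (Real.exp (-((2^n : ℕ) * (Real.sqrt v * gaussianPDFReal 0 v.toNNReal (a + Real.sqrt v))))) := by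
        rw [← Real.exp_nat_mul]; ring_nf

lemma tendsto_bound {c : ℝ} (hc0 : 0 ≤ c) (hc : c < Real.sqrt 2) :
    Filter.Tendsto (fun n : ℕ => ((2^n : ℕ) : ℝ) * (Real.sqrt (((2:ℝ)^n)⁻¹) *
        gaussianPDFReal 0 (((2:ℝ)^n)⁻¹).toNNReal
          (c * Real.sqrt (((2:ℝ)^n)⁻¹ * (n * Real.log 2)) + Real.sqrt (((2:ℝ)^n)⁻¹))))
      Filter.atTop Filter.atTop := by
  have h2pi : (0:ℝ) < 2*π := by positivity
  have hc2 : c^2 < 2 := by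
    nlinarith [Real.sq_sqrt (by norm_num : (0:ℝ) ≤ 2), Real.sqrt_nonneg 2]
  have hε : 0 < 1 - c^2/2 := by linarith
  have key : ∀ n : ℕ, ((2^n : ℕ) : ℝ) * (Real.sqrt (((2:ℝ)^n)⁻¹) *
        gaussianPDFReal 0 (((2:ℝ)^n)⁻¹).toNNReal
          (c * Real.sqrt (((2:ℝ)^n)⁻¹ * (n * Real.log 2)) + Real.sqrt (((2:ℝ)^n)⁻¹)))
      = (Real.sqrt (2*π))⁻¹ *
          Real.exp ((1 - c^2/2) * (n * Real.log 2) - c * Real.sqrt (n * Real.log 2) - 1/2) := by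
    intro n
    set v : ℝ := ((2:ℝ)^n)⁻¹ with hvdef
    have hv : 0 < v := by positivity
    set L : ℝ := n * Real.log 2 with hLdef
    have hL : 0 ≤ L := mul_nonneg (Nat.cast_nonneg n) (Real.log_nonneg one_le_two)
    have hsv : 0 < Real.sqrt v := Real.sqrt_pos.2 hv
    have hspi : 0 < Real.sqrt (2*π) := Real.sqrt_pos.2 h2pi
    rw [pdf_eval hv]
    have hsq : -(c * Real.sqrt (v*L) + Real.sqrt v)^2 / (2*v) = -(c * Real.sqrt L + 1)^2 / 2 := by
      have hy : c * Real.sqrt (v * L) + Real.sqrt v = Real.sqrt v * (c * Real.sqrt L + 1) := by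
        rw [Real.sqrt_mul hv.le]; ring
      rw [hy, mul_pow, Real.sq_sqrt hv.le]
      field_simp
    have h2pv : Real.sqrt (2*π*v) = Real.sqrt (2*π) * Real.sqrt v := Real.sqrt_mul h2pi.le v
    have hexp2 : ((2^n : ℕ) : ℝ) = Real.exp L := by
      rw [hLdef, Real.exp_nat_mul, Real.exp_log two_pos]; push_cast; ring
    rw [hsq, h2pv, hexp2]
    have hLsq : (c * Real.sqrt L + 1)^2 = c^2 * L + 2*c*Real.sqrt L + 1 := by
      have h := Real.sq_sqrt hL
      nlinarith [h]
    have harg : (1 - c^2/2) * L - c * Real.sqrt L - 1/2 = L + (-(c * Real.sqrt L + 1)^2/2) := by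
      rw [hLsq]; ring
    rw [harg, Real.exp_add]
    field_simp
  simp only [key]
  apply Filter.Tendsto.const_mul_atTop (by positivity : (0:ℝ) < (Real.sqrt (2*π))⁻¹)
  apply Real.tendsto_exp_atTop.comp
  have hLt : Filter.Tendsto (fun n : ℕ => (n : ℝ) * Real.log 2) atTop atTop :=
    (tendsto_natCast_atTop_atTop).atTop_mul_const (Real.log_pos one_lt_two)
  have hg : Filter.Tendsto (fun u : ℝ => (1 - c^2/2) * u - c * Real.sqrt u - 1/2) atTop atTop := by
    apply Filter.tendsto_atTop_mono' _ _
      (Filter.tendsto_atTop_add_const_right _ (-(1/2) : ℝ)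
        (Filter.Tendsto.const_mul_atTop (by positivity : 0 < (1 - c^2/2)/2) Filter.tendsto_id))
    filter_upwards [Filter.eventually_ge_atTop ((2*c/(1 - c^2/2))^2),
      Filter.eventually_ge_atTop (0:ℝ)] with u hu hu0
    have hs := Real.sq_sqrt hu0
    have hsn := Real.sqrt_nonneg u
    have h2 : 2*c/(1 - c^2/2) ≤ Real.sqrt u := by
      calc 2*c/(1 - c^2/2) ≤ |2*c/(1 - c^2/2)| := le_abs_self _
        _ = Real.sqrt ((2*c/(1 - c^2/2))^2) := (Real.sqrt_sq_eq_abs _).symm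
        _ ≤ Real.sqrt u := Real.sqrt_le_sqrt hu
    have h3 : c * Real.sqrt u ≤ (1 - c^2/2)/2 * u := by
      have h4 : 2*c ≤ (1 - c^2/2) * Real.sqrt u := by
        rw [div_le_iff₀ hε] at h2; linarith
      nlinarith [mul_le_mul_of_nonneg_right h4 hsn]
    simp only [id]
    linarith
  exact hg.comp hLt

end LevyHelpers

set_option maxHeartbeats 1000000 in
open Real Filter Topology in
/-- Lower modulus of continuity: almost surely, for every `c < √2` and every
`h₀ > 0` there are `t ∈ [0,1]` and `h ∈ (0, h₀)` with `t + h ≤ 1` such that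
`|B(t+h) − B(t)| > c·√(h·log(1/h))`. -/
theorem stmt_5 {Ω : Type} [MeasurableSpace Ω] (P : Measure Ω) (B : ℝ → Ω → ℝ)
    (hB : IsStdBM P B) :
    ∀ᵐ ω ∂P, ∀ c : ℝ, c < Real.sqrt 2 → ∀ h₀ : ℝ, 0 < h₀ →
      ∃ t : ℝ, 0 ≤ t ∧ t ≤ 1 ∧ ∃ h : ℝ, 0 < h ∧ h < h₀ ∧ t + h ≤ 1 ∧
        |B (t + h) ω - B t ω| > c * Real.sqrt (h * Real.log (1 / h)) := by
  haveI := hB.isProb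
  classical
  set cm : ℕ → ℝ := fun m => Real.sqrt 2 - 1/(m+1) with hcm
  have hsqrt2 : (1:ℝ) ≤ Real.sqrt 2 := by
    nlinarith [Real.sq_sqrt (by norm_num : (0:ℝ) ≤ 2), Real.sqrt_nonneg 2]
  have hcm0 : ∀ m : ℕ, 0 ≤ cm m := by
    intro m
    have h1 : (1:ℝ)/(m+1) ≤ 1 := by
      rw [div_le_one (by positivity)]
      have : (0:ℝ) ≤ m := Nat.cast_nonneg m
      linarith
    simp only [hcm]; linarith
  have hcmlt : ∀ m : ℕ, cm m < Real.sqrt 2 := by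
    intro m
    simp only [hcm]
    have : (0:ℝ) < 1/(m+1) := by positivity
    linarith
  set a : ℕ → ℕ → ℝ := fun m n => cm m * Real.sqrt (((2:ℝ)^n)⁻¹ * (n * Real.log 2)) with ha
  have ha0 : ∀ m n, 0 ≤ a m n := fun m n => mul_nonneg (hcm0 m) (Real.sqrt_nonneg _)
  set A : ℕ → ℕ → Set Ω := fun m n =>
    ⋂ i : Fin (2^n), {ω | |B (((i:ℕ)+1) * ((2:ℝ)^n)⁻¹) ω - B ((i:ℕ) * ((2:ℝ)^n)⁻¹) ω| ≤ a m n}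
    with hA
  set F : ℕ → ℕ → ENNReal := fun m n =>
    ENNReal.ofReal (Real.exp (-(((2^n : ℕ):ℝ) * (Real.sqrt (((2:ℝ)^n)⁻¹) *
      gaussianPDFReal 0 (((2:ℝ)^n)⁻¹).toNNReal (a m n + Real.sqrt (((2:ℝ)^n)⁻¹)))))) with hF
  have hPA : ∀ m n, P (A m n) ≤ F m n := fun m n => level_bound P B hB n (ha0 m n)
  have hto : ∀ m, Filter.Tendsto (F m) atTop (𝓝 0) := by
    intro m
    have h1 := tendsto_bound (hcm0 m) (hcmlt m)
    have h2 := Real.tendsto_exp_atBot.comp (Filter.tendsto_neg_atTop_atBot.comp h1)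
    have h3 := ENNReal.tendsto_ofReal h2
    rw [hF]
    simpa only [Function.comp_def, ENNReal.ofReal_zero] using h3
  have hnull : ∀ m N, P (⋂ n : ℕ, A m (N + n)) = 0 := by
    intro m N
    refine le_antisymm ?_ zero_le
    refine ge_of_tendsto (hto m) ?_
    rw [Filter.eventually_atTop]
    refine ⟨N, fun k hk => ?_⟩
    calc P (⋂ n : ℕ, A m (N + n)) ≤ P (A m (N + (k - N))) :=
          measure_mono (Set.iInter_subset _ (k - N))
      _ = P (A m k) := by rw [Nat.add_sub_cancel' hk]
      _ ≤ F m k := hPA m k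
  have hbad : P (⋃ m, ⋃ N, ⋂ n, A m (N + n)) = 0 :=
    measure_iUnion_null fun m => measure_iUnion_null fun N => hnull m N
  rw [← compl_mem_ae_iff] at hbad
  filter_upwards [hbad] with ω hω
  intro c hc h₀ hh₀
  simp only [Set.mem_compl_iff, Set.mem_iUnion, Set.mem_iInter, not_exists, not_forall] at hω
  -- choose m with c ≤ cm m
  obtain ⟨m, hm⟩ := exists_nat_one_div_lt (by linarith : (0:ℝ) < Real.sqrt 2 - c)
  have hcle : c ≤ cm m := by
    simp only [hcm]
    have : (1:ℝ)/(m+1) < Real.sqrt 2 - c := hm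
    linarith
  -- choose N with (2^N)⁻¹ < h₀
  obtain ⟨N, hN⟩ := exists_pow_lt_of_lt_one hh₀ (by norm_num : (1:ℝ)/2 < 1)
  have hN' : ((2:ℝ)^N)⁻¹ < h₀ := by
    rwa [one_div, inv_pow] at hN
  obtain ⟨n', hn'⟩ := hω m N
  set n : ℕ := N + n' with hn
  rw [hA] at hn'
  simp only [Set.mem_iInter, not_forall, Set.mem_setOf_eq, not_le] at hn'
  obtain ⟨i, hi⟩ := hn'
  set h : ℝ := ((2:ℝ)^n)⁻¹ with hh
  have hhpos : 0 < h := by positivity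
  refine ⟨(i:ℕ) * h, by positivity, ?_, h, hhpos, ?_, ?_, ?_⟩
  · -- t ≤ 1
    have h1 : ((i:ℕ) + 1 : ℝ) * h ≤ 1 := by
      have hile : ((i:ℕ) + 1 : ℝ) ≤ (2:ℝ)^n := by
        exact_mod_cast Nat.succ_le_of_lt i.isLt
      calc ((i:ℕ) + 1 : ℝ) * h ≤ (2:ℝ)^n * h := by
            exact mul_le_mul_of_nonneg_right hile hhpos.le
        _ = 1 := by rw [hh]; field_simp
    nlinarith [hhpos]
  · -- h < h₀
    calc h ≤ ((2:ℝ)^N)⁻¹ := by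
          apply inv_anti₀ (by positivity)
          exact pow_le_pow_right₀ one_le_two (Nat.le_add_right N n')
      _ < h₀ := hN'
  · -- t + h ≤ 1
    have hile : ((i:ℕ) + 1 : ℝ) ≤ (2:ℝ)^n := by
      exact_mod_cast Nat.succ_le_of_lt i.isLt
    calc (i:ℕ) * h + h = ((i:ℕ) + 1 : ℝ) * h := by ring
      _ ≤ (2:ℝ)^n * h := mul_le_mul_of_nonneg_right hile hhpos.le
      _ = 1 := by rw [hh]; field_simp
  · -- the inequality
    have hlog : Real.log (1 / h) = n * Real.log 2 := by
      rw [hh, one_div, inv_inv, Real.log_pow]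
    have key : a m n < |B ((i:ℕ) * h + h) ω - B ((i:ℕ) * h) ω| := by
      have harg : ((i:ℕ) + 1 : ℝ) * h = (i:ℕ) * h + h := by ring
      rw [← harg]
      exact hi
    have hfin : c * Real.sqrt (h * Real.log (1 / h)) ≤ a m n := by
      rw [hlog, ha]
      exact mul_le_mul_of_nonneg_right hcle (Real.sqrt_nonneg _)
    exact lt_of_le_of_lt hfin key
end
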